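/- arXiv:2205.06857 — 2 statements merged into one kernel-verified Lean document; each statement's English description precedes it below -/
import Mathlib

section
/- Let (U,F,t) be a Set Cover instance in which every element belongs to at least one set. If there exists X ⊆ F with |X| ≤ t and ∪_{S∈X} S = U, then the subdivided-star gerrymandering instance constructed from (U,F,t) admits a district-partition into k = t+4 districts that is satisfying for the preferred candidate p. -/
attribute [local instance] Classical.propDecidable

/-- Candidate `c` *leads* district `D` (unweighted): `c`'s vote count is at least that of
every candidate. -/
def leadsIn {V C : Type*} (χ : V → C) (c : C) (D : Finset V) : Prop :=
  ∀ c' : C, (D.filter fun x => χ x = c').card ≤ (D.filter fun x => χ x = c).card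

/-- Candidate `c` *wins* district `D` (unweighted): `c`'s vote count strictly exceeds that of
every other candidate. -/
def winsIn {V C : Type*} (χ : V → C) (c : C) (D : Finset V) : Prop :=
  ∀ c' : C, c' ≠ c → (D.filter fun x => χ x = c').card < (D.filter fun x => χ x = c).card

/-- A district-partition of `G` into `k` districts: `k` pairwise-disjoint nonempty vertex sets
covering all vertices, each inducing a connected subgraph. -/
def IsDistrictPartition {V : Type*} (G : SimpleGraph V) (k : ℕ) (P : Finset (Finset V)) : Prop :=
  P.card = k ∧ (∀ D ∈ P, D.Nonempty) ∧
    (∀ D ∈ P, ∀ D' ∈ P, D ≠ D' → Disjoint D D') ∧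
    (∀ x : V, ∃ D ∈ P, x ∈ D) ∧
    (∀ D ∈ P, (G.induce (D : Set V)).Connected)

/-- A district-partition is *satisfying* for the preferred candidate `p` if `p` wins strictly
more districts than any other candidate leads. -/
def SatisfyingFor {V C : Type*} (χ : V → C) (p : C) (P : Finset (Finset V)) : Prop :=
  ∀ q : C, q ≠ p →
    (P.filter fun D => leadsIn χ q D).card < (P.filter fun D => winsIn χ p D).card

/-- Vertices of the subdivided-star gerrymandering instance: the root `r`; branch 1 vertices
`c_1, c_2, u_1, …, u_n`; branch 2 vertices `w_1, …, w_{t-1}`; and, on each of the `t`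
selection branches `s`, the initial vertices `v_0^1, …, v_0^n` (constructor `v0`), the group
vertices `x_i` and `v_i^j` for `i ∈ [m]` (group `g_i`), and the final vertices
`y_0, …, y_m`. -/
inductive VS (n m t : ℕ) : Type where
  | root
  | c1
  | c2
  | u (j : Fin n)
  | w (i : Fin (t - 1))
  | v0 (s : Fin t) (j : Fin n)
  | x (s : Fin t) (i : Fin m)
  | v (s : Fin t) (i : Fin m) (j : Fin n)
  | y (s : Fin t) (i : Fin (m + 1))
  deriving DecidableEq, Fintype

/-- Candidates of the subdivided-star instance: the preferred candidate `p`, the ally `q`,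
element candidates `a_j` for `j ∈ [n]`, and branch candidates `b_s` for `s ∈ [t]`. -/
inductive CS (n t : ℕ) : Type where
  | p
  | q
  | a (j : Fin n)
  | b (s : Fin t)
  deriving DecidableEq

/-- Candidate preferences of the subdivided-star instance. -/
def chiS {n m t : ℕ} : VS n m t → CS n t
  | .root => .q
  | .c1 => .p
  | .c2 => .p
  | .u j => .a j
  | .w _ => .q
  | .v0 _ j => .a j
  | .x _ _ => .q
  | .v _ _ j => .a j
  | .y s _ => .b s

/-- Position of each non-root vertex along its branch, as a pair
(branch index, 0-based distance from the root along the branch minus one); the vertex at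
position 0 of each branch is adjacent to the root.  Branch 0 is `c_1, c_2, u_1, …, u_n`;
branch 1 is `w_1, …, w_{t-1}`; branch `2 + s` is selection branch `s`, ordered as
`v_0^1, …, v_0^n`, then groups `g_1, …, g_m` (group `g_i` consists of the vertices `v_i^j`
with `e_j ∉ S_i` in increasing order of `j`, then `x_i`, then the vertices `v_i^j` with
`e_j ∈ S_i` in increasing order of `j`), then `y_0, …, y_m`. -/
def posS {n m t : ℕ} (S : Fin m → Finset (Fin n)) : VS n m t → Option (ℕ × ℕ)
  | .root => none
  | .c1 => some (0, 0)
  | .c2 => some (0, 1)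
  | .u j => some (0, 2 + (j : ℕ))
  | .w i => some (1, (i : ℕ))
  | .v0 s j => some (2 + (s : ℕ), (j : ℕ))
  | .x s i => some (2 + (s : ℕ), n + (i : ℕ) * (n + 1) + (n - (S i).card))
  | .v s i j => some (2 + (s : ℕ), n + (i : ℕ) * (n + 1) +
      (if j ∈ S i then n - (S i).card + 1 + ((S i).filter fun j' => j' < j).card
       else ((S i)ᶜ.filter fun j' => j' < j).card))
  | .y s i => some (2 + (s : ℕ), n + m * (n + 1) + (i : ℕ))

/-- The subdivided star: the root is adjacent to the vertex at position 0 of each branch, and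
vertices at consecutive positions of the same branch are adjacent. -/
def GS {n m t : ℕ} (S : Fin m → Finset (Fin n)) : SimpleGraph (VS n m t) :=
  SimpleGraph.fromRel (fun a b =>
    (a = VS.root ∧ ∃ br, posS S b = some (br, 0)) ∨
    (∃ br k, posS S a = some (br, k) ∧ posS S b = some (br, k + 1)))


namespace StarAux

open Finset

variable {n m t : ℕ}

lemma filter_lt_max'_card (T : Finset (Fin n)) (hT : T.Nonempty) :
    (T.filter fun a => a < T.max' hT).card = T.card - 1 := by
  have he : (T.filter fun a => a < T.max' hT) = T.erase (T.max' hT) := by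
    ext a
    simp only [mem_filter, mem_erase]
    constructor
    · rintro ⟨ha, hlt⟩; exact ⟨ne_of_lt hlt, ha⟩
    · rintro ⟨hne, ha⟩; exact ⟨ha, lt_of_le_of_ne (T.le_max' a ha) hne⟩
  rw [he, card_erase_of_mem (T.max'_mem hT)]

lemma step_down (T : Finset (Fin n)) (j : Fin n)
    (h : (T.filter fun b => b < j).Nonempty) :
    ∃ j' ∈ T, j' < j ∧
      (T.filter fun b => b < j').card = (T.filter fun b => b < j).card - 1 := by
  obtain ⟨j₀, hj₀T, hj₀lt, hmax⟩ : ∃ j₀ ∈ T, j₀ < j ∧ ∀ b ∈ T, b < j → b ≤ j₀ := by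
    refine ⟨(T.filter fun b => b < j).max' h, ?_, ?_, ?_⟩
    · exact (mem_filter.mp (Finset.max'_mem _ h)).1
    · exact (mem_filter.mp (Finset.max'_mem _ h)).2
    · intro b hb hlt
      have hbm : b ∈ T.filter fun b => b < j := mem_filter.mpr ⟨hb, hlt⟩
      exact Finset.le_max' _ b hbm
  refine ⟨j₀, hj₀T, hj₀lt, ?_⟩
  have he : (T.filter fun b => b < j₀) = (T.filter fun b => b < j).erase j₀ := by
    ext a
    simp only [mem_filter, mem_erase]
    constructor
    · rintro ⟨ha, hlt⟩
      exact ⟨ne_of_lt hlt, ha, lt_trans hlt hj₀lt⟩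
    · rintro ⟨hne, ha, hltj⟩
      exact ⟨ha, lt_of_le_of_ne (hmax a ha hltj) hne⟩
  have hj₀m : j₀ ∈ T.filter fun b => b < j := mem_filter.mpr ⟨hj₀T, hj₀lt⟩
  rw [he, card_erase_of_mem hj₀m]

lemma group_le_iff (i i₀ o o₀ : ℕ) (ho : o ≤ n) (ho₀ : o₀ ≤ n) :
    n + i * (n + 1) + o ≤ n + i₀ * (n + 1) + o₀ ↔ (i < i₀ ∨ (i = i₀ ∧ o ≤ o₀)) := by
  rcases lt_trichotomy i i₀ with h | h | h
  · have h1 : (i + 1) * (n + 1) ≤ i₀ * (n + 1) := Nat.mul_le_mul h le_rfl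
    have h2 : (i + 1) * (n + 1) = i * (n + 1) + (n + 1) := Nat.succ_mul _ _
    constructor
    · intro _; exact Or.inl h
    · intro _; omega
  · subst h
    constructor
    · intro hh; exact Or.inr ⟨rfl, by omega⟩
    · rintro (hh | ⟨-, hh⟩) <;> omega
  · have h1 : (i₀ + 1) * (n + 1) ≤ i * (n + 1) := Nat.mul_le_mul h le_rfl
    have h2 : (i₀ + 1) * (n + 1) = i₀ * (n + 1) + (n + 1) := Nat.succ_mul _ _
    constructor
    · intro hh; omega
    · rintro (hh | ⟨hh, -⟩) <;> omega

section Main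

variable (S : Fin m → Finset (Fin n)) (σ : Fin t → Fin m)

/-- offset of `v s i j` within its group. -/
noncomputable def off (i : Fin m) (j : Fin n) : ℕ :=
  if j ∈ S i then n - (S i).card + 1 + ((S i).filter fun j' => j' < j).card
  else ((S i)ᶜ.filter fun j' => j' < j).card

lemma posS_v (s : Fin t) (i : Fin m) (j : Fin n) :
    posS S (VS.v s i j) = some (2 + (s : ℕ), n + (i : ℕ) * (n + 1) + off S i j) := rfl

lemma card_S_le (i : Fin m) : (S i).card ≤ n := by
  simpa using card_le_univ (S i)

lemma card_compl_S (i : Fin m) : ((S i)ᶜ).card = n - (S i).card := by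
  simp [card_compl]

lemma off_le (i : Fin m) (j : Fin n) : off S i j ≤ n := by
  unfold off
  split_ifs with h
  · have h1 : ((S i).filter fun j' => j' < j) ⊆ (S i).erase j := by
      intro a ha
      rw [mem_filter] at ha
      exact mem_erase.mpr ⟨ne_of_lt ha.2, ha.1⟩
    have h2 := card_le_card h1
    rw [card_erase_of_mem h] at h2
    have h3 := card_S_le S i
    have h4 : 1 ≤ (S i).card := card_pos.mpr ⟨j, h⟩
    omega
  · have h2 := card_filter_le ((S i)ᶜ) (fun j' => j' < j)
    have h3 := card_compl_S S i
    omega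

lemma off_mem (i : Fin m) (j : Fin n) (hj : j ∈ S i) :
    off S i j = n - (S i).card + 1 + ((S i).filter fun j' => j' < j).card := by
  unfold off; rw [if_pos hj]

lemma off_not_mem (i : Fin m) (j : Fin n) (hj : j ∉ S i) :
    off S i j = ((S i)ᶜ.filter fun j' => j' < j).card := by
  unfold off; rw [if_neg hj]

lemma off_not_mem_le (i : Fin m) (j : Fin n) (hj : j ∉ S i) :
    off S i j ≤ n - (S i).card := by
  rw [off_not_mem S i j hj]
  have h2 := card_filter_le ((S i)ᶜ) (fun j' => j' < j)
  have h3 := card_compl_S S i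
  omega

/-- district label of each vertex -/
noncomputable def lab : VS n m t → ℕ
  | .c1 => 0
  | .c2 => 1
  | .u _ => 2
  | .root => 3
  | .w _ => 3
  | .v0 _ _ => 3
  | .x s i => if (i : ℕ) ≤ (σ s : ℕ) then 3 else 4 + (s : ℕ)
  | .v s i j =>
      if ((i : ℕ) < (σ s : ℕ) ∨ ((i : ℕ) = (σ s : ℕ) ∧ j ∉ S (σ s))) then 3 else 4 + (s : ℕ)
  | .y s _ => 4 + (s : ℕ)

/-- position of the cut vertex `x (σ s)` on selection branch `s`. -/
def Xpos (s : Fin t) : ℕ := n + (σ s : ℕ) * (n + 1) + (n - (S (σ s)).card)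

lemma lab_lt (v : VS n m t) : lab S σ v < t + 4 := by
  cases v with
  | x s i => have := s.isLt; simp only [lab]; split_ifs <;> omega
  | v s i j => have := s.isLt; simp only [lab]; split_ifs <;> omega
  | y s i => have := s.isLt; simp only [lab]; omega
  | _ => simp [lab]

lemma branch_shape (v : VS n m t) (br k : ℕ) (h : posS S v = some (br, k)) :
    br = 0 ∨ br = 1 ∨ ∃ s : Fin t, br = 2 + (s : ℕ) := by
  cases v with
  | root => simp [posS] at h
  | c1 => simp only [posS, Option.some.injEq, Prod.mk.injEq] at h; exact Or.inl h.1.symm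
  | c2 => simp only [posS, Option.some.injEq, Prod.mk.injEq] at h; exact Or.inl h.1.symm
  | u j => simp only [posS, Option.some.injEq, Prod.mk.injEq] at h; exact Or.inl h.1.symm
  | w i =>
      simp only [posS, Option.some.injEq, Prod.mk.injEq] at h; exact Or.inr (Or.inl h.1.symm)
  | v0 s j =>
      simp only [posS, Option.some.injEq, Prod.mk.injEq] at h
      exact Or.inr (Or.inr ⟨s, h.1.symm⟩)
  | x s i =>
      simp only [posS, Option.some.injEq, Prod.mk.injEq] at h
      exact Or.inr (Or.inr ⟨s, h.1.symm⟩)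
  | v s i j =>
      rw [posS_v] at h
      simp only [Option.some.injEq, Prod.mk.injEq] at h
      exact Or.inr (Or.inr ⟨s, h.1.symm⟩)
  | y s i =>
      simp only [posS, Option.some.injEq, Prod.mk.injEq] at h
      exact Or.inr (Or.inr ⟨s, h.1.symm⟩)

lemma exists_pos (v : VS n m t) (hv : v ≠ VS.root) : ∃ br k, posS S v = some (br, k) := by
  cases v <;> first | exact absurd rfl hv | exact ⟨_, _, rfl⟩

lemma lab_branch0 (v : VS n m t) (k : ℕ) (h : posS S v = some (0, k)) :
    lab S σ v ≤ 2 := by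
  cases v with
  | root => simp [posS] at h
  | c1 => simp [lab]
  | c2 => simp [lab]
  | u j => simp [lab]
  | w i => simp only [posS, Option.some.injEq, Prod.mk.injEq] at h; omega
  | v0 s j => simp only [posS, Option.some.injEq, Prod.mk.injEq] at h; omega
  | x s i => simp only [posS, Option.some.injEq, Prod.mk.injEq] at h; omega
  | v s i j =>
      rw [posS_v] at h; simp only [Option.some.injEq, Prod.mk.injEq] at h; omega
  | y s i => simp only [posS, Option.some.injEq, Prod.mk.injEq] at h; omega

lemma lab_branch1 (v : VS n m t) (k : ℕ) (h : posS S v = some (1, k)) :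
    lab S σ v = 3 := by
  cases v with
  | root => simp [posS] at h
  | c1 => simp only [posS, Option.some.injEq, Prod.mk.injEq] at h; omega
  | c2 => simp only [posS, Option.some.injEq, Prod.mk.injEq] at h; omega
  | u j => simp only [posS, Option.some.injEq, Prod.mk.injEq] at h; omega
  | w i => simp [lab]
  | v0 s j => simp [lab]
  | x s i => simp only [posS, Option.some.injEq, Prod.mk.injEq] at h; omega
  | v s i j =>
      rw [posS_v] at h; simp only [Option.some.injEq, Prod.mk.injEq] at h; omega
  | y s i => simp only [posS, Option.some.injEq, Prod.mk.injEq] at h; omega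

lemma lab3_of_le (v : VS n m t) (s : Fin t) (k : ℕ)
    (h : posS S v = some (2 + (s : ℕ), k)) (hk : k ≤ Xpos S σ s) : lab S σ v = 3 := by
  unfold Xpos at hk
  cases v with
  | root => simp [posS] at h
  | c1 => simp only [posS, Option.some.injEq, Prod.mk.injEq] at h; omega
  | c2 => simp only [posS, Option.some.injEq, Prod.mk.injEq] at h; omega
  | u j => simp only [posS, Option.some.injEq, Prod.mk.injEq] at h; omega
  | w i => simp only [posS, Option.some.injEq, Prod.mk.injEq] at h; omega
  | v0 s' j => simp [lab]
  | x s' i =>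
      simp only [posS, Option.some.injEq, Prod.mk.injEq] at h
      have hs : s = s' := Fin.ext (by omega)
      subst hs
      have hcmp := (group_le_iff (n := n) (i : ℕ) ((σ s) : ℕ) (n - (S i).card) (n - (S (σ s)).card)
        (by omega) (by omega)).mp (by omega)
      simp only [lab]
      rw [if_pos (by omega)]
  | v s' i j =>
      rw [posS_v] at h
      simp only [Option.some.injEq, Prod.mk.injEq] at h
      have hs : s = s' := Fin.ext (by omega)
      subst hs
      have hcmp := (group_le_iff (n := n) (i : ℕ) ((σ s) : ℕ) (off S i j) (n - (S (σ s)).card)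
        (off_le S i j) (by omega)).mp (by omega)
      simp only [lab]
      rcases hcmp with h1 | ⟨h1, h2⟩
      · rw [if_pos (Or.inl h1)]
      · have hfi : i = σ s := Fin.ext h1
        have hj : j ∉ S (σ s) := by
          intro hjj
          rw [hfi, off_mem S (σ s) j hjj] at h2
          omega
        rw [if_pos (Or.inr ⟨h1, hj⟩)]
  | y s' i =>
      simp only [posS, Option.some.injEq, Prod.mk.injEq] at h
      exfalso
      have h1 : ((σ s : ℕ) + 1) * (n + 1) ≤ m * (n + 1) := Nat.mul_le_mul (σ s).isLt le_rfl
      have h2 : ((σ s : ℕ) + 1) * (n + 1) = (σ s : ℕ) * (n + 1) + (n + 1) := Nat.succ_mul _ _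
      omega

lemma lab_gt (v : VS n m t) (s : Fin t) (k : ℕ)
    (h : posS S v = some (2 + (s : ℕ), k)) (hk : Xpos S σ s < k) : lab S σ v = 4 + (s : ℕ) := by
  unfold Xpos at hk
  cases v with
  | root => simp [posS] at h
  | c1 => simp only [posS, Option.some.injEq, Prod.mk.injEq] at h; omega
  | c2 => simp only [posS, Option.some.injEq, Prod.mk.injEq] at h; omega
  | u j => simp only [posS, Option.some.injEq, Prod.mk.injEq] at h; omega
  | w i => simp only [posS, Option.some.injEq, Prod.mk.injEq] at h; omega
  | v0 s' j =>
      simp only [posS, Option.some.injEq, Prod.mk.injEq] at h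
      have := j.isLt
      omega
  | x s' i =>
      simp only [posS, Option.some.injEq, Prod.mk.injEq] at h
      have hs : s = s' := Fin.ext (by omega)
      subst hs
      simp only [lab]
      rw [if_neg]
      intro hle
      rcases Nat.lt_or_ge (i : ℕ) ((σ s) : ℕ) with h1 | h1
      · have := (group_le_iff (n := n) (i : ℕ) ((σ s) : ℕ) (n - (S i).card) (n - (S (σ s)).card)
          (by omega) (by omega)).mpr (Or.inl h1)
        omega
      · have h2 : (i : ℕ) = (σ s : ℕ) := by omega
        have hfi : i = σ s := Fin.ext h2
        rw [hfi] at h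
        omega
  | v s' i j =>
      rw [posS_v] at h
      simp only [Option.some.injEq, Prod.mk.injEq] at h
      have hs : s = s' := Fin.ext (by omega)
      subst hs
      simp only [lab]
      rw [if_neg]
      rintro (h1 | ⟨h1, h2⟩)
      · have := (group_le_iff (n := n) (i : ℕ) ((σ s) : ℕ) (off S i j) (n - (S (σ s)).card)
          (off_le S i j) (by omega)).mpr (Or.inl h1)
        omega
      · have hfi : i = σ s := Fin.ext h1
        subst hfi
        have h3 := off_not_mem_le S (σ s) j h2
        have := (group_le_iff (n := n) ((σ s) : ℕ) ((σ s) : ℕ) (off S (σ s) j) (n - (S (σ s)).card)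
          (off_le S (σ s) j) (by omega)).mpr (Or.inr ⟨rfl, h3⟩)
        omega
  | y s' i =>
      simp only [posS, Option.some.injEq, Prod.mk.injEq] at h
      have hs : s = s' := Fin.ext (by omega)
      subst hs
      simp [lab]

lemma le_of_lab3 (v : VS n m t) (s : Fin t) (k : ℕ)
    (h : posS S v = some (2 + (s : ℕ), k)) (h3 : lab S σ v = 3) : k ≤ Xpos S σ s := by
  by_contra hk
  have := lab_gt S σ v s k h (by omega)
  omega

lemma gt_of_lab4 (v : VS n m t) (s : Fin t) (k : ℕ)
    (h : posS S v = some (2 + (s : ℕ), k)) (h4 : lab S σ v = 4 + (s : ℕ)) :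
    Xpos S σ s < k := by
  by_contra hk
  have := lab3_of_le S σ v s k h (by omega)
  omega


lemma exists_last_of_group (s : Fin t) (i : Fin m) :
    ∃ b : VS n m t, posS S b = some (2 + (s : ℕ), n + (i : ℕ) * (n + 1) + n) := by
  by_cases h : (S i).Nonempty
  · refine ⟨VS.v s i ((S i).max' h), ?_⟩
    rw [posS_v]
    have hmem : (S i).max' h ∈ S i := (S i).max'_mem h
    have hoff : off S i ((S i).max' h) = n := by
      rw [off_mem S i _ hmem, filter_lt_max'_card _ h]
      have h1 : 1 ≤ (S i).card := card_pos.mpr h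
      have h2 := card_S_le S i
      omega
    rw [hoff]
  · have hc : (S i).card = 0 := card_eq_zero.mpr (not_nonempty_iff_eq_empty.mp h)
    refine ⟨VS.x s i, ?_⟩
    simp [posS, hc]

lemma exists_last_of_group' (s : Fin t) (iv : ℕ) (hiv : iv < m) :
    ∃ b : VS n m t, posS S b = some (2 + (s : ℕ), n + iv * (n + 1) + n) := by
  obtain ⟨b, hb⟩ := exists_last_of_group S s ⟨iv, hiv⟩
  exact ⟨b, hb⟩

lemma pred_group_start (hn : 1 ≤ n) (s : Fin t) (i : Fin m) :
    ∃ b : VS n m t, posS S b = some (2 + (s : ℕ), n + (i : ℕ) * (n + 1) - 1) := by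
  rcases Nat.eq_zero_or_pos (i : ℕ) with h0 | h0
  · refine ⟨VS.v0 s ⟨n - 1, by omega⟩, ?_⟩
    have hmul : (i : ℕ) * (n + 1) = 0 := by rw [h0]; ring
    simp only [posS, Option.some.injEq, Prod.mk.injEq]
    refine ⟨trivial, ?_⟩
    show n - 1 = n + (i : ℕ) * (n + 1) - 1
    omega
  · obtain ⟨b, hb⟩ := exists_last_of_group' S s ((i : ℕ) - 1) (by have := i.isLt; omega)
    refine ⟨b, ?_⟩
    rw [hb]
    simp only [Option.some.injEq, Prod.mk.injEq]
    have hmul : (i : ℕ) * (n + 1) = ((i : ℕ) - 1) * (n + 1) + (n + 1) := by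
      calc (i : ℕ) * (n + 1) = (((i : ℕ) - 1) + 1) * (n + 1) := by congr 1; omega
        _ = ((i : ℕ) - 1) * (n + 1) + (n + 1) := Nat.succ_mul _ _
    exact ⟨trivial, by omega⟩

lemma exists_pred (hn : 1 ≤ n) (hm : 1 ≤ m) (v : VS n m t) (br k : ℕ)
    (h : posS S v = some (br, k + 1)) :
    ∃ b : VS n m t, posS S b = some (br, k) := by
  cases v with
  | root => simp [posS] at h
  | c1 => simp only [posS, Option.some.injEq, Prod.mk.injEq] at h; omega
  | c2 =>
      refine ⟨VS.c1, ?_⟩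
      simp only [posS, Option.some.injEq, Prod.mk.injEq] at h ⊢
      omega
  | u j =>
      simp only [posS, Option.some.injEq, Prod.mk.injEq] at h
      rcases Nat.eq_zero_or_pos (j : ℕ) with h0 | h0
      · refine ⟨VS.c2, ?_⟩
        simp only [posS, Option.some.injEq, Prod.mk.injEq]
        omega
      · refine ⟨VS.u ⟨(j : ℕ) - 1, by have := j.isLt; omega⟩, ?_⟩
        simp only [posS, Option.some.injEq, Prod.mk.injEq]
        omega
  | w i =>
      simp only [posS, Option.some.injEq, Prod.mk.injEq] at h
      refine ⟨VS.w ⟨(i : ℕ) - 1, by have := i.isLt; omega⟩, ?_⟩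
      simp only [posS, Option.some.injEq, Prod.mk.injEq]
      omega
  | v0 s j =>
      simp only [posS, Option.some.injEq, Prod.mk.injEq] at h
      refine ⟨VS.v0 s ⟨(j : ℕ) - 1, by have := j.isLt; omega⟩, ?_⟩
      simp only [posS, Option.some.injEq, Prod.mk.injEq]
      omega
  | x s i =>
      simp only [posS, Option.some.injEq, Prod.mk.injEq] at h
      by_cases hc : (S i).card < n
      · have hcompl : ((S i)ᶜ).Nonempty := by
          rw [← card_pos, card_compl_S]; omega
        refine ⟨VS.v s i (((S i)ᶜ).max' hcompl), ?_⟩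
        rw [posS_v]
        have hnot : ((S i)ᶜ).max' hcompl ∉ S i := by
          have := ((S i)ᶜ).max'_mem hcompl
          simpa [Finset.mem_compl] using this
        have hoff : off S i (((S i)ᶜ).max' hcompl) = n - (S i).card - 1 := by
          rw [off_not_mem S i _ hnot, filter_lt_max'_card _ hcompl, card_compl_S]
        rw [hoff]
        simp only [Option.some.injEq, Prod.mk.injEq]
        omega
      · obtain ⟨b, hb⟩ := pred_group_start S hn s i
        refine ⟨b, ?_⟩
        rw [hb]
        simp only [Option.some.injEq, Prod.mk.injEq]
        have hc' : (S i).card = n := le_antisymm (card_S_le S i) (by omega)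
        omega
  | v s i j =>
      rw [posS_v] at h
      simp only [Option.some.injEq, Prod.mk.injEq] at h
      by_cases hj : j ∈ S i
      · have hoffj := off_mem S i j hj
        by_cases hne : ((S i).filter fun b => b < j).Nonempty
        · obtain ⟨j', hj'T, hj'lt, hcard⟩ := step_down (S i) j hne
          have hpos : 1 ≤ ((S i).filter fun b => b < j).card := card_pos.mpr hne
          refine ⟨VS.v s i j', ?_⟩
          rw [posS_v]
          have hoffj' := off_mem S i j' hj'T
          simp only [Option.some.injEq, Prod.mk.injEq]
          omega
        · have hcnt : ((S i).filter fun b => b < j).card = 0 :=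
            card_eq_zero.mpr (not_nonempty_iff_eq_empty.mp hne)
          refine ⟨VS.x s i, ?_⟩
          simp only [posS, Option.some.injEq, Prod.mk.injEq]
          omega
      · have hoffj := off_not_mem S i j hj
        by_cases hne : (((S i)ᶜ).filter fun b => b < j).Nonempty
        · obtain ⟨j', hj'T, hj'lt, hcard⟩ := step_down ((S i)ᶜ) j hne
          have hpos : 1 ≤ (((S i)ᶜ).filter fun b => b < j).card := card_pos.mpr hne
          have hj'not : j' ∉ S i := by simpa [Finset.mem_compl] using hj'T
          refine ⟨VS.v s i j', ?_⟩
          rw [posS_v]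
          have hoffj' := off_not_mem S i j' hj'not
          simp only [Option.some.injEq, Prod.mk.injEq]
          omega
        · have hcnt : (((S i)ᶜ).filter fun b => b < j).card = 0 :=
            card_eq_zero.mpr (not_nonempty_iff_eq_empty.mp hne)
          obtain ⟨b, hb⟩ := pred_group_start S hn s i
          refine ⟨b, ?_⟩
          rw [hb]
          simp only [Option.some.injEq, Prod.mk.injEq]
          omega
  | y s i =>
      simp only [posS, Option.some.injEq, Prod.mk.injEq] at h
      rcases Nat.eq_zero_or_pos (i : ℕ) with h0 | h0
      · obtain ⟨b, hb⟩ := exists_last_of_group' S s (m - 1) (by omega)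
        refine ⟨b, ?_⟩
        rw [hb]
        simp only [Option.some.injEq, Prod.mk.injEq]
        have hmul : m * (n + 1) = (m - 1) * (n + 1) + (n + 1) := by
          calc m * (n + 1) = ((m - 1) + 1) * (n + 1) := by congr 1; omega
            _ = (m - 1) * (n + 1) + (n + 1) := Nat.succ_mul _ _
        omega
      · refine ⟨VS.y s ⟨(i : ℕ) - 1, by have := i.isLt; omega⟩, ?_⟩
        simp only [posS, Option.some.injEq, Prod.mk.injEq]
        omega

lemma pos_le_top (v : VS n m t) (s : Fin t) (k : ℕ)
    (h : posS S v = some (2 + (s : ℕ), k)) : k ≤ n + m * (n + 1) + m := by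
  cases v with
  | root => simp [posS] at h
  | c1 => simp only [posS, Option.some.injEq, Prod.mk.injEq] at h; omega
  | c2 => simp only [posS, Option.some.injEq, Prod.mk.injEq] at h; omega
  | u j => simp only [posS, Option.some.injEq, Prod.mk.injEq] at h; omega
  | w i => simp only [posS, Option.some.injEq, Prod.mk.injEq] at h; omega
  | v0 s' j =>
      simp only [posS, Option.some.injEq, Prod.mk.injEq] at h
      have := j.isLt
      omega
  | x s' i =>
      simp only [posS, Option.some.injEq, Prod.mk.injEq] at h
      have h1 : ((i : ℕ) + 1) * (n + 1) ≤ m * (n + 1) := Nat.mul_le_mul i.isLt le_rfl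
      have h2 : ((i : ℕ) + 1) * (n + 1) = (i : ℕ) * (n + 1) + (n + 1) := Nat.succ_mul _ _
      omega
  | v s' i j =>
      rw [posS_v] at h
      simp only [Option.some.injEq, Prod.mk.injEq] at h
      have h1 : ((i : ℕ) + 1) * (n + 1) ≤ m * (n + 1) := Nat.mul_le_mul i.isLt le_rfl
      have h2 : ((i : ℕ) + 1) * (n + 1) = (i : ℕ) * (n + 1) + (n + 1) := Nat.succ_mul _ _
      have h3 := off_le S i j
      omega
  | y s' i =>
      simp only [posS, Option.some.injEq, Prod.mk.injEq] at h
      have := i.isLt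
      omega

lemma uniq_top (v : VS n m t) (s : Fin t)
    (h : posS S v = some (2 + (s : ℕ), n + m * (n + 1) + m)) :
    v = VS.y s ⟨m, Nat.lt_succ_self m⟩ := by
  cases v with
  | root => simp [posS] at h
  | c1 => simp only [posS, Option.some.injEq, Prod.mk.injEq] at h; omega
  | c2 => simp only [posS, Option.some.injEq, Prod.mk.injEq] at h; omega
  | u j => simp only [posS, Option.some.injEq, Prod.mk.injEq] at h; omega
  | w i => simp only [posS, Option.some.injEq, Prod.mk.injEq] at h; omega
  | v0 s' j =>
      simp only [posS, Option.some.injEq, Prod.mk.injEq] at h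
      have := j.isLt
      omega
  | x s' i =>
      simp only [posS, Option.some.injEq, Prod.mk.injEq] at h
      have h1 : ((i : ℕ) + 1) * (n + 1) ≤ m * (n + 1) := Nat.mul_le_mul i.isLt le_rfl
      have h2 : ((i : ℕ) + 1) * (n + 1) = (i : ℕ) * (n + 1) + (n + 1) := Nat.succ_mul _ _
      omega
  | v s' i j =>
      rw [posS_v] at h
      simp only [Option.some.injEq, Prod.mk.injEq] at h
      have h1 : ((i : ℕ) + 1) * (n + 1) ≤ m * (n + 1) := Nat.mul_le_mul i.isLt le_rfl
      have h2 : ((i : ℕ) + 1) * (n + 1) = (i : ℕ) * (n + 1) + (n + 1) := Nat.succ_mul _ _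
      have h3 := off_le S i j
      omega
  | y s' i =>
      simp only [posS, Option.some.injEq, Prod.mk.injEq] at h
      have hs : s' = s := Fin.ext (by omega)
      have hi : i = ⟨m, Nat.lt_succ_self m⟩ := Fin.ext (show (i : ℕ) = m by omega)
      rw [hs, hi]

lemma exists_at (hn : 1 ≤ n) (hm : 1 ≤ m) (s : Fin t) :
    ∀ d k, k + d = n + m * (n + 1) + m →
      ∃ b : VS n m t, posS S b = some (2 + (s : ℕ), k) := by
  intro d
  induction d with
  | zero =>
      intro k hk
      have hk' : k = n + m * (n + 1) + m := by omega
      subst hk'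
      exact ⟨VS.y s ⟨m, Nat.lt_succ_self m⟩, rfl⟩
  | succ d ih =>
      intro k hk
      obtain ⟨b, hb⟩ := ih (k + 1) (by omega)
      exact exists_pred S hn hm b _ k hb

lemma adj_step (a b : VS n m t) (br k : ℕ)
    (ha : posS S a = some (br, k)) (hb : posS S b = some (br, k + 1)) : (GS S).Adj a b := by
  simp only [GS, SimpleGraph.fromRel_adj]
  refine ⟨?_, Or.inl (Or.inr ⟨br, k, ha, hb⟩)⟩
  intro hab
  rw [hab, hb] at ha
  simp only [Option.some.injEq, Prod.mk.injEq] at ha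
  omega

lemma adj_root (b : VS n m t) (br : ℕ) (hb : posS S b = some (br, 0)) :
    (GS S).Adj VS.root b := by
  unfold GS
  rw [SimpleGraph.fromRel_adj]
  refine ⟨?_, Or.inl (Or.inl ⟨rfl, br, hb⟩)⟩
  intro hrb
  rw [← hrb] at hb
  simp [posS] at hb

/-- the districts. -/
noncomputable def Dl (l : ℕ) : Finset (VS n m t) := univ.filter fun v => lab S σ v = l

lemma mem_Dl (v : VS n m t) (l : ℕ) : v ∈ Dl S σ l ↔ lab S σ v = l := by
  simp [Dl]

lemma reach_of_adj {G : SimpleGraph (VS n m t)} {D : Finset (VS n m t)} {a b : VS n m t}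
    (ha : a ∈ D) (hb : b ∈ D) (h : G.Adj a b) :
    (G.induce (D : Set (VS n m t))).Reachable ⟨a, ha⟩ ⟨b, hb⟩ :=
  SimpleGraph.Adj.reachable h

lemma conn_of_reach_anchor {G : SimpleGraph (VS n m t)} {D : Finset (VS n m t)}
    (anchor : VS n m t) (hA : anchor ∈ D)
    (h : ∀ v (hv : v ∈ D), (G.induce (D : Set (VS n m t))).Reachable ⟨v, hv⟩ ⟨anchor, hA⟩) :
    (G.induce (D : Set (VS n m t))).Connected := by
  rw [SimpleGraph.connected_iff]
  constructor
  · rintro ⟨a, ha⟩ ⟨b, hb⟩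
    exact (h a ha).trans (h b hb).symm
  · exact ⟨⟨anchor, hA⟩⟩

lemma conn_single (G : SimpleGraph (VS n m t)) (a : VS n m t) :
    (G.induce (({a} : Finset (VS n m t)) : Set (VS n m t))).Connected := by
  rw [SimpleGraph.connected_iff]
  constructor
  · rintro ⟨x, hx⟩ ⟨y, hy⟩
    have hx' : x = a := by simpa using hx
    have hy' : y = a := by simpa using hy
    subst hx'
    subst hy'
    exact SimpleGraph.Reachable.refl _
  · exact ⟨⟨a, by simp⟩⟩

lemma conn_D3 (hn : 1 ≤ n) (hm : 1 ≤ m) :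
    ((GS S).induce ((Dl S σ 3 : Finset (VS n m t)) : Set (VS n m t))).Connected := by
  have hroot : VS.root ∈ Dl S σ 3 := (mem_Dl S σ _ _).mpr rfl
  apply conn_of_reach_anchor (anchor := VS.root) (hA := hroot)
  have key : ∀ k (v : VS n m t) (hv : v ∈ Dl S σ 3) (br : ℕ), posS S v = some (br, k) →
      ((GS S).induce ((Dl S σ 3 : Finset (VS n m t)) : Set (VS n m t))).Reachable
        ⟨v, hv⟩ ⟨VS.root, hroot⟩ := by
    intro k
    induction k with
    | zero =>
        intro v hv br hpos
        exact (reach_of_adj hroot hv (adj_root S v br hpos)).symm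
    | succ k ih =>
        intro v hv br hpos
        obtain ⟨b, hb⟩ := exists_pred S hn hm v br k hpos
        have hbD : b ∈ Dl S σ 3 := by
          rcases branch_shape S v br (k + 1) hpos with h0 | h1 | ⟨s, hs⟩
          · exfalso
            have h2 := lab_branch0 S σ v (k + 1) (h0 ▸ hpos)
            have h3 := (mem_Dl S σ v 3).mp hv
            omega
          · subst h1
            exact (mem_Dl S σ b 3).mpr (lab_branch1 S σ b k hb)
          · subst hs
            have hX := le_of_lab3 S σ v s (k + 1) hpos ((mem_Dl S σ v 3).mp hv)
            exact (mem_Dl S σ b 3).mpr (lab3_of_le S σ b s k hb (by omega))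
        exact (reach_of_adj hbD hv (adj_step S b v br k hb hpos)).symm.trans (ih b hbD br hb)
  intro v hv
  by_cases hvr : v = VS.root
  · subst hvr
    exact SimpleGraph.Reachable.refl _
  · obtain ⟨br, k, hpos⟩ := exists_pos S v hvr
    exact key k v hv br hpos

lemma mem_Dl2 (v : VS n m t) (hv : v ∈ Dl S σ 2) : ∃ j, v = VS.u j := by
  have h := (mem_Dl S σ v 2).mp hv
  cases v with
  | u j => exact ⟨j, rfl⟩
  | root => simp [lab] at h
  | c1 => simp [lab] at h
  | c2 => simp [lab] at h
  | w i => simp [lab] at h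
  | v0 s j => simp [lab] at h
  | x s i => simp only [lab] at h; split_ifs at h <;> omega
  | v s i j => simp only [lab] at h; split_ifs at h <;> omega
  | y s i => simp only [lab] at h; omega

lemma conn_D2 (hn : 1 ≤ n) :
    ((GS S).induce ((Dl S σ 2 : Finset (VS n m t)) : Set (VS n m t))).Connected := by
  have hu0 : VS.u ⟨0, hn⟩ ∈ Dl S σ 2 := (mem_Dl S σ _ _).mpr rfl
  apply conn_of_reach_anchor (anchor := VS.u ⟨0, hn⟩) (hA := hu0)
  have key : ∀ jv (hjv : jv < n),
      ((GS S).induce ((Dl S σ 2 : Finset (VS n m t)) : Set (VS n m t))).Reachable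
        ⟨VS.u ⟨jv, hjv⟩, (mem_Dl S σ _ _).mpr rfl⟩ ⟨VS.u ⟨0, hn⟩, hu0⟩ := by
    intro jv
    induction jv with
    | zero =>
        intro hjv
        exact SimpleGraph.Reachable.refl _
    | succ jv ih =>
        intro hjv
        have hmem : VS.u ⟨jv, by omega⟩ ∈ Dl S σ 2 := (mem_Dl S σ _ _).mpr rfl
        have hadj : (GS S).Adj (VS.u ⟨jv, by omega⟩ : VS n m t) (VS.u ⟨jv + 1, hjv⟩) :=
          adj_step S _ _ 0 (2 + jv) rfl rfl
        have hmem2 : VS.u ⟨jv + 1, hjv⟩ ∈ Dl S σ 2 := (mem_Dl S σ _ _).mpr rfl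
        exact (reach_of_adj hmem hmem2 hadj).symm.trans (ih (by omega))
  intro v hv
  obtain ⟨j, rfl⟩ := mem_Dl2 S σ v hv
  exact key (j : ℕ) j.isLt

lemma conn_D45 (hn : 1 ≤ n) (hm : 1 ≤ m) (s : Fin t) :
    ((GS S).induce ((Dl S σ (4 + (s : ℕ)) : Finset (VS n m t)) : Set (VS n m t))).Connected := by
  have hym : VS.y s ⟨m, Nat.lt_succ_self m⟩ ∈ Dl S σ (4 + (s : ℕ)) :=
    (mem_Dl S σ _ _).mpr rfl
  apply conn_of_reach_anchor (anchor := VS.y s ⟨m, Nat.lt_succ_self m⟩) (hA := hym)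
  have key : ∀ d k (v : VS n m t) (hv : v ∈ Dl S σ (4 + (s : ℕ))),
      posS S v = some (2 + (s : ℕ), k) → k + d = n + m * (n + 1) + m →
      ((GS S).induce ((Dl S σ (4 + (s : ℕ)) : Finset (VS n m t)) : Set (VS n m t))).Reachable
        ⟨v, hv⟩ ⟨VS.y s ⟨m, Nat.lt_succ_self m⟩, hym⟩ := by
    intro d
    induction d with
    | zero =>
        intro k v hv hpos hd
        have hk : k = n + m * (n + 1) + m := by omega
        subst hk
        have hveq := uniq_top S v s hpos
        subst hveq
        exact SimpleGraph.Reachable.refl _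
    | succ d ih =>
        intro k v hv hpos hd
        obtain ⟨b, hb⟩ := exists_at S hn hm s d (k + 1) (by omega)
        have hXv := gt_of_lab4 S σ v s k hpos ((mem_Dl S σ _ _).mp hv)
        have hbD : b ∈ Dl S σ (4 + (s : ℕ)) :=
          (mem_Dl S σ _ _).mpr (lab_gt S σ b s (k + 1) hb (by omega))
        exact (reach_of_adj hv hbD (adj_step S v b _ k hpos hb)).trans
          (ih (k + 1) b hbD hb (by omega))
  intro v hv
  have hlabv := (mem_Dl S σ v _).mp hv
  have hvr : v ≠ VS.root := by
    intro hh
    rw [hh] at hlabv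
    simp only [lab] at hlabv
    omega
  obtain ⟨br, k, hpos⟩ := exists_pos S v hvr
  rcases branch_shape S v br k hpos with h0 | h1 | ⟨s', hs⟩
  · exfalso
    have := lab_branch0 S σ v k (h0 ▸ hpos)
    omega
  · exfalso
    have := lab_branch1 S σ v k (h1 ▸ hpos)
    omega
  · subst hs
    by_cases hle : k ≤ Xpos S σ s'
    · exfalso
      have := lab3_of_le S σ v s' k hpos hle
      omega
    · have h4 : lab S σ v = 4 + (s' : ℕ) := lab_gt S σ v s' k hpos (by omega)
      have hss : s = s' := Fin.ext (by omega)
      subst hss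
      have hk := pos_le_top S v s k hpos
      exact key (n + m * (n + 1) + m - k) k v hv hpos (by omega)

lemma Dl_nonempty (hn : 1 ≤ n) (l : ℕ) (hl : l < t + 4) : (Dl S σ l).Nonempty := by
  rcases Nat.lt_or_ge l 4 with h4 | h4
  · interval_cases l
    · exact ⟨VS.c1, (mem_Dl S σ _ _).mpr rfl⟩
    · exact ⟨VS.c2, (mem_Dl S σ _ _).mpr rfl⟩
    · exact ⟨VS.u ⟨0, hn⟩, (mem_Dl S σ _ _).mpr rfl⟩
    · exact ⟨VS.root, (mem_Dl S σ _ _).mpr rfl⟩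
  · refine ⟨VS.y ⟨l - 4, by omega⟩ ⟨0, by omega⟩, (mem_Dl S σ _ _).mpr ?_⟩
    simp only [lab]
    omega



/-! ### Counting -/

lemma chi_p (v : VS n m t) (h : chiS v = CS.p) : v = VS.c1 ∨ v = VS.c2 := by
  cases v with
  | c1 => exact Or.inl rfl
  | c2 => exact Or.inr rfl
  | root => exact absurd h (by simp [chiS])
  | u j => exact absurd h (by simp [chiS])
  | w i => exact absurd h (by simp [chiS])
  | v0 s j => exact absurd h (by simp [chiS])
  | x s i => exact absurd h (by simp [chiS])
  | v s i j => exact absurd h (by simp [chiS])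
  | y s i => exact absurd h (by simp [chiS])

lemma chi_q (v : VS n m t) (h : chiS v = CS.q) :
    v = VS.root ∨ (∃ i, v = VS.w i) ∨ (∃ s i, v = VS.x s i) := by
  cases v with
  | root => exact Or.inl rfl
  | w i => exact Or.inr (Or.inl ⟨i, rfl⟩)
  | x s i => exact Or.inr (Or.inr ⟨s, i, rfl⟩)
  | c1 => exact absurd h (by simp [chiS])
  | c2 => exact absurd h (by simp [chiS])
  | u j => exact absurd h (by simp [chiS])
  | v0 s j => exact absurd h (by simp [chiS])
  | v s i j => exact absurd h (by simp [chiS])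
  | y s i => exact absurd h (by simp [chiS])

lemma chi_a (v : VS n m t) (j : Fin n) (h : chiS v = CS.a j) :
    v = VS.u j ∨ (∃ s, v = VS.v0 s j) ∨ (∃ s i, v = VS.v s i j) := by
  cases v with
  | u j' => injection h with hj; subst hj; exact Or.inl rfl
  | v0 s j' => injection h with hj; subst hj; exact Or.inr (Or.inl ⟨s, rfl⟩)
  | v s i j' => injection h with hj; subst hj; exact Or.inr (Or.inr ⟨s, i, rfl⟩)
  | root => exact absurd h (by simp [chiS])
  | c1 => exact absurd h (by simp [chiS])
  | c2 => exact absurd h (by simp [chiS])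
  | w i => exact absurd h (by simp [chiS])
  | x s i => exact absurd h (by simp [chiS])
  | y s i => exact absurd h (by simp [chiS])

lemma chi_b (v : VS n m t) (s : Fin t) (h : chiS v = CS.b s) : ∃ i, v = VS.y s i := by
  cases v with
  | y s' i => injection h with hs; subst hs; exact ⟨i, rfl⟩
  | root => exact absurd h (by simp [chiS])
  | c1 => exact absurd h (by simp [chiS])
  | c2 => exact absurd h (by simp [chiS])
  | u j => exact absurd h (by simp [chiS])
  | w i => exact absurd h (by simp [chiS])
  | v0 s j => exact absurd h (by simp [chiS])
  | x s i => exact absurd h (by simp [chiS])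
  | v s i j => exact absurd h (by simp [chiS])

/-- vote count of candidate `c` in district `D`. -/
noncomputable def cnt (D : Finset (VS n m t)) (c : CS n t) : ℕ :=
  (D.filter fun x => chiS x = c).card

lemma leadsIn_iff (c : CS n t) (D : Finset (VS n m t)) :
    leadsIn chiS c D ↔ ∀ c', cnt D c' ≤ cnt D c := by
  unfold leadsIn cnt
  constructor <;> intro h c' <;> (have h2 := h c'; convert h2 using 3)

lemma winsIn_iff (c : CS n t) (D : Finset (VS n m t)) :
    winsIn chiS c D ↔ ∀ c', c' ≠ c → cnt D c' < cnt D c := by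
  unfold winsIn cnt
  constructor <;> intro h c' hc <;> (have h2 := h c' hc; convert h2 using 3)

lemma cnt_singleton (a : VS n m t) (c : CS n t) :
    cnt {a} c = if chiS a = c then 1 else 0 := by
  unfold cnt
  rw [Finset.filter_singleton]
  split_ifs <;> simp

lemma singleton_wins (a : VS n m t) : winsIn chiS (chiS a) {a} := by
  rw [winsIn_iff]
  intro c' hc
  rw [cnt_singleton, cnt_singleton, if_pos rfl, if_neg (fun hh => hc hh.symm)]
  omega

lemma singleton_notlead (a : VS n m t) (q' : CS n t) (hq : q' ≠ chiS a) :
    ¬ leadsIn chiS q' {a} := by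
  rw [leadsIn_iff]
  intro h
  have h2 := h (chiS a)
  rw [cnt_singleton, cnt_singleton, if_pos rfl, if_neg (fun hh => hq hh.symm)] at h2
  omega

lemma cnt_eq_zero (D : Finset (VS n m t)) (c : CS n t)
    (h : ∀ v ∈ D, ¬ chiS v = c) : cnt D c = 0 := by
  unfold cnt
  rw [card_eq_zero, filter_eq_empty_iff]
  exact h

lemma mem_Dl0 (v : VS n m t) (hv : v ∈ Dl S σ 0) : v = VS.c1 := by
  have h := (mem_Dl S σ v 0).mp hv
  cases v with
  | c1 => rfl
  | root => simp [lab] at h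
  | c2 => simp [lab] at h
  | u j => simp [lab] at h
  | w i => simp [lab] at h
  | v0 s j => simp [lab] at h
  | x s i => simp only [lab] at h; split_ifs at h <;> omega
  | v s i j => simp only [lab] at h; split_ifs at h <;> omega
  | y s i => simp only [lab] at h; omega

lemma mem_Dl1 (v : VS n m t) (hv : v ∈ Dl S σ 1) : v = VS.c2 := by
  have h := (mem_Dl S σ v 1).mp hv
  cases v with
  | c2 => rfl
  | root => simp [lab] at h
  | c1 => simp [lab] at h
  | u j => simp [lab] at h
  | w i => simp [lab] at h
  | v0 s j => simp [lab] at h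
  | x s i => simp only [lab] at h; split_ifs at h <;> omega
  | v s i j => simp only [lab] at h; split_ifs at h <;> omega
  | y s i => simp only [lab] at h; omega

lemma Dl0_eq : Dl S σ 0 = {VS.c1} := by
  rw [Finset.eq_singleton_iff_unique_mem]
  exact ⟨(mem_Dl S σ _ _).mpr rfl, mem_Dl0 S σ⟩

lemma Dl1_eq : Dl S σ 1 = {VS.c2} := by
  rw [Finset.eq_singleton_iff_unique_mem]
  exact ⟨(mem_Dl S σ _ _).mpr rfl, mem_Dl1 S σ⟩

lemma cnt_D2_q : cnt (Dl S σ 2) CS.q = 0 := by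
  apply cnt_eq_zero
  intro v hv hc
  have hl := (mem_Dl S σ v _).mp hv
  rcases chi_q v hc with rfl | ⟨i, rfl⟩ | ⟨s, i, rfl⟩
  · simp only [lab] at hl; omega
  · simp only [lab] at hl; omega
  · simp only [lab] at hl; split_ifs at hl <;> omega

lemma cnt_D2_p : cnt (Dl S σ 2) CS.p = 0 := by
  apply cnt_eq_zero
  intro v hv hc
  have hl := (mem_Dl S σ v _).mp hv
  rcases chi_p v hc with rfl | rfl <;> simp only [lab] at hl <;> omega

lemma cnt_D2_b (s : Fin t) : cnt (Dl S σ 2) (CS.b s) = 0 := by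
  apply cnt_eq_zero
  intro v hv hc
  have hl := (mem_Dl S σ v _).mp hv
  obtain ⟨i, rfl⟩ := chi_b v s hc
  simp only [lab] at hl; omega

lemma cnt_D2_a0 (hn : 1 ≤ n) : 1 ≤ cnt (Dl S σ 2) (CS.a ⟨0, hn⟩) := by
  unfold cnt
  apply card_pos.mpr
  exact ⟨VS.u ⟨0, hn⟩, mem_filter.mpr ⟨(mem_Dl S σ _ _).mpr rfl, rfl⟩⟩

lemma notlead_D2 (hn : 1 ≤ n) (q' : CS n t) (hq : ∀ j : Fin n, q' ≠ CS.a j) :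
    ¬ leadsIn chiS q' (Dl S σ 2) := by
  rw [leadsIn_iff]
  intro h
  have h2 := h (CS.a ⟨0, hn⟩)
  have h3 := cnt_D2_a0 S σ hn
  cases q' with
  | p => have := cnt_D2_p S σ; omega
  | q => have := cnt_D2_q S σ; omega
  | a j => exact hq j rfl
  | b s => have := cnt_D2_b S σ s; omega

lemma cnt_D3_p : cnt (Dl S σ 3) CS.p = 0 := by
  apply cnt_eq_zero
  intro v hv hc
  have hl := (mem_Dl S σ v _).mp hv
  rcases chi_p v hc with rfl | rfl <;> simp only [lab] at hl <;> omega

lemma cnt_D3_b (s : Fin t) : cnt (Dl S σ 3) (CS.b s) = 0 := by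
  apply cnt_eq_zero
  intro v hv hc
  have hl := (mem_Dl S σ v _).mp hv
  obtain ⟨i, rfl⟩ := chi_b v s hc
  simp only [lab] at hl; omega

lemma cnt_D3_q_pos : 1 ≤ cnt (Dl S σ 3) CS.q := by
  unfold cnt
  apply card_pos.mpr
  exact ⟨VS.root, mem_filter.mpr ⟨(mem_Dl S σ _ _).mpr rfl, rfl⟩⟩

/-- the injection used to compare `a j` votes with `q` votes in the central district. -/
noncomputable def Finj (s0 : Fin t) : VS n m t → VS n m t
  | .v0 s _ =>
      if h : s = s0 then VS.x s0 (σ s0)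
      else VS.w ⟨if (s : ℕ) < (s0 : ℕ) then (s : ℕ) else (s : ℕ) - 1, by
        have h1 := s.isLt
        have h2 := s0.isLt
        have h3 : (s : ℕ) ≠ (s0 : ℕ) := fun hh => h (Fin.ext hh)
        split_ifs <;> omega⟩
  | .v s i _ => VS.x s i
  | v => v

lemma memA_shape (j : Fin n) (v : VS n m t)
    (hv : v ∈ (Dl S σ 3).filter fun x => chiS x = CS.a j) :
    (∃ s, v = VS.v0 s j) ∨
      (∃ s i, v = VS.v s i j ∧
        ((i : ℕ) < ((σ s : Fin m) : ℕ) ∨ ((i : ℕ) = ((σ s : Fin m) : ℕ) ∧ j ∉ S (σ s)))) := by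
  rw [mem_filter] at hv
  rcases chi_a v j hv.2 with h1 | ⟨s, h1⟩ | ⟨s, i, h1⟩
  · exfalso
    subst h1
    have hl := (mem_Dl S σ _ _).mp hv.1
    simp only [lab] at hl
    omega
  · exact Or.inl ⟨s, h1⟩
  · subst h1
    have hl := (mem_Dl S σ _ _).mp hv.1
    refine Or.inr ⟨s, i, rfl, ?_⟩
    by_contra hc
    simp only [lab] at hl
    rw [if_neg hc] at hl
    omega

lemma Finj_v0_pos (s0 : Fin t) (j : Fin n) :
    Finj σ s0 (VS.v0 s0 j) = VS.x s0 (σ s0) := by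
  simp [Finj]

lemma Finj_v0_neg (s0 s : Fin t) (j : Fin n) (h : ¬ s = s0) :
    ∃ iw : Fin (t - 1), Finj σ s0 (VS.v0 s j) = VS.w iw ∧
      (iw : ℕ) = (if (s : ℕ) < (s0 : ℕ) then (s : ℕ) else (s : ℕ) - 1) := by
  simp only [Finj]
  rw [dif_neg h]
  exact ⟨_, rfl, rfl⟩

lemma Finj_v (s0 s : Fin t) (i : Fin m) (j : Fin n) :
    Finj σ s0 (VS.v s i j) = VS.x s i := rfl

lemma cnt_D3_a_lt_q (hσ : ∀ j : Fin n, ∃ s : Fin t, j ∈ S (σ s)) (j : Fin n) :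
    cnt (Dl S σ 3) (CS.a j) < cnt (Dl S σ 3) CS.q := by
  obtain ⟨s0, hs0⟩ := hσ j
  unfold cnt
  have hrootQ : VS.root ∈ (Dl S σ 3).filter fun x => chiS x = CS.q :=
    mem_filter.mpr ⟨(mem_Dl S σ _ _).mpr rfl, rfl⟩
  have hcard : ((Dl S σ 3).filter fun x => chiS x = CS.a j).card ≤
      (((Dl S σ 3).filter fun x => chiS x = CS.q).erase VS.root).card := by
    apply card_le_card_of_injOn (Finj σ s0)
    · intro v hv
      rcases memA_shape S σ j v hv with ⟨s, rfl⟩ | ⟨s, i, rfl, hcond⟩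
      · by_cases hss : s = s0
        · rw [hss, Finj_v0_pos σ s0 j]
          refine mem_erase.mpr ⟨by simp, mem_filter.mpr ⟨(mem_Dl S σ _ _).mpr ?_, rfl⟩⟩
          simp [lab]
        · obtain ⟨iw, hFeq, -⟩ := Finj_v0_neg σ s0 s j hss
          rw [hFeq]
          exact mem_erase.mpr ⟨by simp, mem_filter.mpr ⟨(mem_Dl S σ _ _).mpr rfl, rfl⟩⟩
      · rw [Finj_v σ s0 s i j]
        refine mem_erase.mpr ⟨by simp, mem_filter.mpr ⟨(mem_Dl S σ _ _).mpr ?_, rfl⟩⟩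
        simp only [lab]
        rw [if_pos]
        rcases hcond with h1 | ⟨h1, -⟩ <;> omega
    · intro a ha b hb heq
      rcases memA_shape S σ j a ha with ⟨s1, rfl⟩ | ⟨s1, i1, rfl, hc1⟩ <;>
        rcases memA_shape S σ j b hb with ⟨s2, rfl⟩ | ⟨s2, i2, rfl, hc2⟩
      · by_cases h1 : s1 = s0 <;> by_cases h2 : s2 = s0
        · rw [h1, h2]
        · obtain ⟨iw, hFeq, -⟩ := Finj_v0_neg σ s0 s2 j h2
          rw [h1, Finj_v0_pos σ s0 j, hFeq] at heq
          cases heq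
        · obtain ⟨iw, hFeq, -⟩ := Finj_v0_neg σ s0 s1 j h1
          rw [h2, Finj_v0_pos σ s0 j, hFeq] at heq
          cases heq
        · obtain ⟨iw1, hFeq1, hiw1⟩ := Finj_v0_neg σ s0 s1 j h1
          obtain ⟨iw2, hFeq2, hiw2⟩ := Finj_v0_neg σ s0 s2 j h2
          rw [hFeq1, hFeq2] at heq
          injection heq with hww
          have hval : (iw1 : ℕ) = (iw2 : ℕ) := by rw [hww]
          have e1 : (s1 : ℕ) ≠ (s0 : ℕ) := fun hh => h1 (Fin.ext hh)
          have e2 : (s2 : ℕ) ≠ (s0 : ℕ) := fun hh => h2 (Fin.ext hh)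
          have : s1 = s2 := Fin.ext (by split_ifs at hiw1 hiw2 <;> omega)
          rw [this]
      · exfalso
        by_cases h1 : s1 = s0
        · rw [h1, Finj_v0_pos σ s0 j, Finj_v σ s0 s2 i2 j] at heq
          injection heq with hs hi
          subst hs
          subst hi
          rcases hc2 with h3 | ⟨-, h4⟩
          · omega
          · exact h4 hs0
        · obtain ⟨iw, hFeq, -⟩ := Finj_v0_neg σ s0 s1 j h1
          rw [hFeq, Finj_v σ s0 s2 i2 j] at heq
          cases heq
      · exfalso
        by_cases h2 : s2 = s0
        · rw [h2, Finj_v0_pos σ s0 j, Finj_v σ s0 s1 i1 j] at heq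
          injection heq with hs hi
          subst hs
          subst hi
          rcases hc1 with h3 | ⟨-, h4⟩
          · omega
          · exact h4 hs0
        · obtain ⟨iw, hFeq, -⟩ := Finj_v0_neg σ s0 s2 j h2
          rw [hFeq, Finj_v σ s0 s1 i1 j] at heq
          cases heq
      · rw [Finj_v σ s0 s1 i1 j, Finj_v σ s0 s2 i2 j] at heq
        injection heq with hs hi
        rw [hs, hi]
  have hlt : (((Dl S σ 3).filter fun x => chiS x = CS.q).erase VS.root).card <
      ((Dl S σ 3).filter fun x => chiS x = CS.q).card :=
    card_erase_lt_of_mem hrootQ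
  omega

lemma notlead_D3 (hσ : ∀ j : Fin n, ∃ s : Fin t, j ∈ S (σ s)) (q' : CS n t)
    (hq : q' ≠ CS.q) : ¬ leadsIn chiS q' (Dl S σ 3) := by
  rw [leadsIn_iff]
  intro h
  have h2 := h CS.q
  have h3 := cnt_D3_q_pos S σ
  cases q' with
  | p => have := cnt_D3_p S σ; omega
  | q => exact hq rfl
  | a j => have := cnt_D3_a_lt_q S σ hσ j; omega
  | b s => have := cnt_D3_b S σ s; omega

lemma cnt_D45_b_ge (s : Fin t) : m + 1 ≤ cnt (Dl S σ (4 + (s : ℕ))) (CS.b s) := by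
  unfold cnt
  have hsub : (univ : Finset (Fin (m + 1))).image (VS.y s) ⊆
      (Dl S σ (4 + (s : ℕ))).filter fun x => chiS x = CS.b s := by
    intro v hv
    obtain ⟨i, -, rfl⟩ := mem_image.mp hv
    exact mem_filter.mpr ⟨(mem_Dl S σ _ _).mpr rfl, rfl⟩
  have hinj : Function.Injective (VS.y s : Fin (m + 1) → VS n m t) := by
    intro a b hab
    injection hab with h1 h2
  calc m + 1 = ((univ : Finset (Fin (m + 1))).image (VS.y s)).card := by
        rw [card_image_of_injective _ hinj]; simp
    _ ≤ _ := card_le_card hsub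

lemma cnt_D45_q_le (s : Fin t) : cnt (Dl S σ (4 + (s : ℕ))) CS.q ≤ m := by
  unfold cnt
  have hsub : ((Dl S σ (4 + (s : ℕ))).filter fun x => chiS x = CS.q) ⊆
      (univ : Finset (Fin m)).image (VS.x s) := by
    intro v hv
    rw [mem_filter] at hv
    have hl := (mem_Dl S σ v _).mp hv.1
    rcases chi_q v hv.2 with rfl | ⟨i, rfl⟩ | ⟨s', i, rfl⟩
    · exfalso; simp only [lab] at hl; omega
    · exfalso; simp only [lab] at hl; omega
    · simp only [lab] at hl
      split_ifs at hl with hc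
      · omega
      · have hss : s = s' := Fin.ext (by omega)
        subst hss
        exact mem_image.mpr ⟨i, mem_univ _, rfl⟩
  calc ((Dl S σ (4 + (s : ℕ))).filter fun x => chiS x = CS.q).card
      ≤ ((univ : Finset (Fin m)).image (VS.x s)).card := card_le_card hsub
    _ ≤ (univ : Finset (Fin m)).card := card_image_le
    _ = m := by simp

lemma cnt_D45_a_le (s : Fin t) (j : Fin n) : cnt (Dl S σ (4 + (s : ℕ))) (CS.a j) ≤ m := by
  unfold cnt
  have hsub : ((Dl S σ (4 + (s : ℕ))).filter fun x => chiS x = CS.a j) ⊆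
      (univ : Finset (Fin m)).image (fun i => VS.v s i j) := by
    intro v hv
    rw [mem_filter] at hv
    have hl := (mem_Dl S σ v _).mp hv.1
    rcases chi_a v j hv.2 with rfl | ⟨s', rfl⟩ | ⟨s', i, rfl⟩
    · exfalso; simp only [lab] at hl; omega
    · exfalso; simp only [lab] at hl; omega
    · simp only [lab] at hl
      split_ifs at hl with hc
      · omega
      · have hss : s = s' := Fin.ext (by omega)
        subst hss
        exact mem_image.mpr ⟨i, mem_univ _, rfl⟩
  calc ((Dl S σ (4 + (s : ℕ))).filter fun x => chiS x = CS.a j).card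
      ≤ ((univ : Finset (Fin m)).image (fun i => VS.v s i j)).card := card_le_card hsub
    _ ≤ (univ : Finset (Fin m)).card := card_image_le
    _ = m := by simp

lemma cnt_D45_p (s : Fin t) : cnt (Dl S σ (4 + (s : ℕ))) CS.p = 0 := by
  apply cnt_eq_zero
  intro v hv hc
  have hl := (mem_Dl S σ v _).mp hv
  rcases chi_p v hc with rfl | rfl <;> simp only [lab] at hl <;> omega

lemma cnt_D45_b' (s s' : Fin t) (hss : s' ≠ s) :
    cnt (Dl S σ (4 + (s : ℕ))) (CS.b s') = 0 := by
  apply cnt_eq_zero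
  intro v hv hc
  have hl := (mem_Dl S σ v _).mp hv
  obtain ⟨i, rfl⟩ := chi_b v s' hc
  simp only [lab] at hl
  exact hss (Fin.ext (by omega))

lemma notlead_D45 (s : Fin t) (q' : CS n t) (hq : q' ≠ CS.b s) :
    ¬ leadsIn chiS q' (Dl S σ (4 + (s : ℕ))) := by
  rw [leadsIn_iff]
  intro h
  have h2 := h (CS.b s)
  have h3 := cnt_D45_b_ge S σ s
  cases q' with
  | p => have := cnt_D45_p S σ s; omega
  | q => have := cnt_D45_q_le S σ s; omega
  | a j => have := cnt_D45_a_le S σ s j; omega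
  | b s' =>
      have hss : s' ≠ s := fun hh => hq (by rw [hh])
      have := cnt_D45_b' S σ s s' hss
      omega


end Main

end StarAux

open StarAux

/-- forward direction of Theorem 2.  Let `(U, F, t)` be a Set Cover
instance in which every element belongs to at least one set.  If there exists `X ⊆ F` with
`|X| ≤ t` and `∪_{S ∈ X} S = U`, then the subdivided-star gerrymandering instance constructed
from `(U, F, t)` admits a district-partition into `k = t + 4` districts that is satisfying for
the preferred candidate `p`. -/
theorem star_cover_imp_gerrymander (n m t : ℕ) (hn : 1 ≤ n) (htm : t ≤ m)
    (S : Fin m → Finset (Fin n))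
    (hcov : ∀ j : Fin n, ∃ i : Fin m, j ∈ S i)
    (hcover : ∃ X : Finset (Fin m), X.card ≤ t ∧ ∀ j : Fin n, ∃ i ∈ X, j ∈ S i) :
    ∃ P : Finset (Finset (VS n m t)),
      IsDistrictPartition (GS S) (t + 4) P ∧ SatisfyingFor chiS CS.p P := by
  classical
  obtain ⟨X, hXcard, hXcov⟩ := hcover
  have hXne : X.Nonempty := by
    obtain ⟨i, hi, -⟩ := hXcov ⟨0, hn⟩
    exact ⟨i, hi⟩
  have hXpos : 0 < X.card := Finset.card_pos.mpr hXne
  have ht : 1 ≤ t := le_trans hXpos hXcard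
  have hm : 1 ≤ m := le_trans ht htm
  set σ : Fin t → Fin m := fun s => (X.sort (· ≤ ·)).getD (s : ℕ) (X.min' hXne) with hσdef
  have hσ : ∀ j : Fin n, ∃ s : Fin t, j ∈ S (σ s) := by
    intro j
    obtain ⟨i, hiX, hij⟩ := hXcov j
    have hiL : i ∈ X.sort (· ≤ ·) := (Finset.mem_sort _).mpr hiX
    obtain ⟨idx, hidx, hgl⟩ := List.mem_iff_getElem.mp hiL
    have hlen : (X.sort (· ≤ ·)).length = X.card := Finset.length_sort _
    have hidxt : idx < t := by omega
    refine ⟨⟨idx, hidxt⟩, ?_⟩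
    have hval : σ ⟨idx, hidxt⟩ = i := by
      rw [hσdef]
      show (X.sort (· ≤ ·)).getD idx (X.min' hXne) = i
      rw [List.getD_eq_getElem (X.sort (· ≤ ·)) (X.min' hXne) hidx]
      exact hgl
    rw [hval]
    exact hij
  refine ⟨(Finset.range (t + 4)).image (Dl S σ), ⟨?_, ?_, ?_, ?_, ?_⟩, ?_⟩
  · -- cardinality
    rw [Finset.card_image_of_injOn, Finset.card_range]
    intro l1 h1 l2 h2 heq
    rw [Finset.mem_coe, Finset.mem_range] at h1 h2
    obtain ⟨v, hv⟩ := Dl_nonempty S σ hn l1 h1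
    have e1 := (mem_Dl S σ v l1).mp hv
    have hv2 : v ∈ Dl S σ l2 := by rw [← heq]; exact hv
    have e2 := (mem_Dl S σ v l2).mp hv2
    omega
  · -- nonempty
    intro D hD
    obtain ⟨l, hl, rfl⟩ := Finset.mem_image.mp hD
    exact Dl_nonempty S σ hn l (Finset.mem_range.mp hl)
  · -- disjoint
    intro D hD D' hD' hne
    obtain ⟨l, hl, rfl⟩ := Finset.mem_image.mp hD
    obtain ⟨l', hl', rfl⟩ := Finset.mem_image.mp hD'
    rw [Finset.disjoint_left]
    intro v hv hv'
    apply hne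
    have e1 := (mem_Dl S σ v l).mp hv
    have e2 := (mem_Dl S σ v l').mp hv'
    have : l = l' := by omega
    rw [this]
  · -- cover
    intro x
    exact ⟨Dl S σ (lab S σ x),
      Finset.mem_image.mpr ⟨lab S σ x, Finset.mem_range.mpr (lab_lt S σ x), rfl⟩,
      (mem_Dl S σ _ _).mpr rfl⟩
  · -- connectivity
    intro D hD
    obtain ⟨l, hl, rfl⟩ := Finset.mem_image.mp hD
    rw [Finset.mem_range] at hl
    rcases Nat.lt_or_ge l 4 with h4 | h4
    · interval_cases l
      · rw [Dl0_eq]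
        exact conn_single (GS S) VS.c1
      · rw [Dl1_eq]
        exact conn_single (GS S) VS.c2
      · exact conn_D2 S σ hn
      · exact conn_D3 S σ hn hm
    · have hs : l = 4 + ((⟨l - 4, by omega⟩ : Fin t) : ℕ) := by
        show l = 4 + (l - 4)
        omega
      rw [hs]
      exact conn_D45 S σ hn hm _
  · -- satisfying
    intro q' hq'
    have hwins : 2 ≤ (((Finset.range (t + 4)).image (Dl S σ)).filter
        fun D => winsIn chiS CS.p D).card := by
      have h0P : Dl S σ 0 ∈ ((Finset.range (t + 4)).image (Dl S σ)).filter
          (fun D => winsIn chiS CS.p D) := by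
        refine Finset.mem_filter.mpr
          ⟨Finset.mem_image.mpr ⟨0, Finset.mem_range.mpr (by omega), rfl⟩, ?_⟩
        rw [Dl0_eq]
        exact singleton_wins VS.c1
      have h1P : Dl S σ 1 ∈ ((Finset.range (t + 4)).image (Dl S σ)).filter
          (fun D => winsIn chiS CS.p D) := by
        refine Finset.mem_filter.mpr
          ⟨Finset.mem_image.mpr ⟨1, Finset.mem_range.mpr (by omega), rfl⟩, ?_⟩
        rw [Dl1_eq]
        exact singleton_wins VS.c2
      have hne01 : Dl S σ 0 ≠ Dl S σ 1 := by
        intro h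
        have h1 : VS.c1 ∈ Dl S σ 1 := by
          rw [← h]
          exact (mem_Dl S σ _ _).mpr rfl
        have := (mem_Dl S σ VS.c1 1).mp h1
        simp [lab] at this
      calc (2 : ℕ) = ({Dl S σ 0, Dl S σ 1} : Finset (Finset (VS n m t))).card := by
            rw [Finset.card_insert_of_notMem (by simpa using hne01), Finset.card_singleton]
        _ ≤ _ := by
            apply Finset.card_le_card
            intro D hD
            rcases Finset.mem_insert.mp hD with rfl | hD1
            · exact h0P
            · rw [Finset.mem_singleton] at hD1
              subst hD1
              exact h1P
    have hleads : (((Finset.range (t + 4)).image (Dl S σ)).filter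
        fun D => leadsIn chiS q' D).card ≤ 1 := by
      have main : ∀ target : Finset (VS n m t),
          (∀ l, l < t + 4 → leadsIn chiS q' (Dl S σ l) → Dl S σ l = target) →
          (((Finset.range (t + 4)).image (Dl S σ)).filter
            fun D => leadsIn chiS q' D).card ≤ 1 := by
        intro target htar
        have hsub : (((Finset.range (t + 4)).image (Dl S σ)).filter
            fun D => leadsIn chiS q' D) ⊆ {target} := by
          intro D hD
          rw [Finset.mem_filter] at hD
          obtain ⟨hDP, hlead⟩ := hD
          obtain ⟨l, hl, rfl⟩ := Finset.mem_image.mp hDP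
          rw [Finset.mem_singleton]
          exact htar l (Finset.mem_range.mp hl) hlead
        simpa using Finset.card_le_card hsub
      cases q' with
      | p => exact absurd rfl hq'
      | q =>
          apply main (Dl S σ 3)
          intro l hl hlead
          rcases Nat.lt_or_ge l 4 with h4 | h4
          · interval_cases l
            · exfalso
              rw [Dl0_eq] at hlead
              exact singleton_notlead VS.c1 CS.q (by simp [chiS]) hlead
            · exfalso
              rw [Dl1_eq] at hlead
              exact singleton_notlead VS.c2 CS.q (by simp [chiS]) hlead
            · exact absurd hlead (notlead_D2 S σ hn CS.q (fun j => by simp))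
            · rfl
          · exfalso
            have hs : l = 4 + ((⟨l - 4, by omega⟩ : Fin t) : ℕ) := by
              show l = 4 + (l - 4)
              omega
            rw [hs] at hlead
            exact notlead_D45 S σ _ CS.q (by simp) hlead
      | a j =>
          apply main (Dl S σ 2)
          intro l hl hlead
          rcases Nat.lt_or_ge l 4 with h4 | h4
          · interval_cases l
            · exfalso
              rw [Dl0_eq] at hlead
              exact singleton_notlead VS.c1 (CS.a j) (by simp [chiS]) hlead
            · exfalso
              rw [Dl1_eq] at hlead
              exact singleton_notlead VS.c2 (CS.a j) (by simp [chiS]) hlead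
            · rfl
            · exact absurd hlead (notlead_D3 S σ hσ (CS.a j) (by simp))
          · exfalso
            have hs : l = 4 + ((⟨l - 4, by omega⟩ : Fin t) : ℕ) := by
              show l = 4 + (l - 4)
              omega
            rw [hs] at hlead
            exact notlead_D45 S σ _ (CS.a j) (by simp) hlead
      | b s =>
          apply main (Dl S σ (4 + (s : ℕ)))
          intro l hl hlead
          rcases Nat.lt_or_ge l 4 with h4 | h4
          · interval_cases l
            · exfalso
              rw [Dl0_eq] at hlead
              exact singleton_notlead VS.c1 (CS.b s) (by simp [chiS]) hlead
            · exfalso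
              rw [Dl1_eq] at hlead
              exact singleton_notlead VS.c2 (CS.b s) (by simp [chiS]) hlead
            · exact absurd hlead (notlead_D2 S σ hn (CS.b s) (fun j => by simp))
            · exact absurd hlead (notlead_D3 S σ hσ (CS.b s) (by simp))
          · by_cases hss : (⟨l - 4, by omega⟩ : Fin t) = s
            · have hval : (s : ℕ) = l - 4 := by rw [← hss]
              have hls : l = 4 + (s : ℕ) := by omega
              rw [hls]
            · exfalso
              have hs : l = 4 + ((⟨l - 4, by omega⟩ : Fin t) : ℕ) := by
                show l = 4 + (l - 4)
                omega
              rw [hs] at hlead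
              refine notlead_D45 S σ _ (CS.b s) ?_ hlead
              intro hh
              injection hh with h'
              exact hss h'.symm
    omega
end

section
/- Let (G, C, w, p, k) be a Weighted Gerrymandering instance where G is a finite tree, let b be a branch vertex of G, and let S = v_1,…,v_s be a segment of G with v_1 = b. For i ∈ [s], let G'_i be the graph obtained from G by deleting the edge v_i v_{i+1} when i < s and contracting v_1,…,v_i into the single vertex b, with weight vector w'(b) = ∑_{j=1}^{i} w(v_j) and all other weights unchanged. Then G admits a district-partition into k districts that is satisfying for p if and only if there exists i ∈ [s] such that G'_i admits a district-partition into k districts that is satisfying for p. -/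
attribute [local instance] Classical.propDecidable

/-- Candidate `c`'s vote count in district `D`, for weight vectors `w`. -/
def votesW {V C : Type*} (w : V → C → ℕ) (c : C) (D : Finset V) : ℕ := ∑ x ∈ D, w x c

/-- Candidate `c` *leads* district `D`: `c`'s vote count is at least that of every
candidate. -/
def leadsW {V C : Type*} (w : V → C → ℕ) (c : C) (D : Finset V) : Prop :=
  ∀ c' : C, votesW w c' D ≤ votesW w c D

/-- Candidate `c` *wins* district `D`: `c`'s vote count strictly exceeds that of every other
candidate. -/
def winsW {V C : Type*} (w : V → C → ℕ) (c : C) (D : Finset V) : Prop :=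
  ∀ c' : C, c' ≠ c → votesW w c' D < votesW w c D

/-- A district-partition is *satisfying* for the preferred candidate `p` if `p` wins strictly
more districts than any other candidate leads. -/
def SatisfyingW {V C : Type*} (w : V → C → ℕ) (p : C) (P : Finset (Finset V)) : Prop :=
  ∀ q : C, q ≠ p →
    (P.filter fun D => leadsW w q D).card < (P.filter fun D => winsW w p D).card

/-- Vertex set obtained from `V` by contracting the prefix `v_0, …, v_i` of the segment `v`
into its first vertex `b = v_0`: we keep `b` and delete the other contracted vertices. -/
abbrev ContractedVerts {V : Type*} (b : V) {s : ℕ} (v : Fin s → V) (i : Fin s) : Type _ :=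
  {x : V // x = b ∨ ∀ j : Fin s, j ≤ i → x ≠ v j}

/-- The graph `G'_i` obtained from `G` by deleting the edge `v_i v_{i+1}` (when `v_{i+1}`
exists) and contracting the prefix `v_0, …, v_i` of the segment into the single vertex `b`:
two surviving vertices other than `b` are adjacent iff they were adjacent in `G`, and `b` is
adjacent to a surviving vertex `y` iff some contracted vertex `v_j` (with `j ≤ i`) is adjacent
to `y` in `G`, except via the deleted edge `v_i v_{i+1}`. -/
def contractGraph {V : Type*} (G : SimpleGraph V) (b : V) {s : ℕ} (v : Fin s → V) (i : Fin s) :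
    SimpleGraph (ContractedVerts b v i) :=
  SimpleGraph.fromRel (fun x y =>
    ((x : V) ≠ b ∧ (y : V) ≠ b ∧ G.Adj (x : V) (y : V)) ∨
    ((x : V) = b ∧ ∃ j : Fin s, j ≤ i ∧ G.Adj (v j) (y : V) ∧
      ¬(j = i ∧ ∃ h : (i : ℕ) + 1 < s, (y : V) = v ⟨(i : ℕ) + 1, h⟩)))

/-- The weight function of the contracted instance: the contracted vertex `b` carries the sum
of the weight vectors of `v_0, …, v_i`, and every other vertex keeps its weight vector. -/
noncomputable def contractWeight {V C : Type*} (w : V → C → ℕ) (b : V) {s : ℕ} (v : Fin s → V) (i : Fin s) :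
    ContractedVerts b v i → C → ℕ :=
  fun x c =>
    if (x : V) = b then ∑ j ∈ Finset.univ.filter (fun j : Fin s => j ≤ i), w (v j) c
    else w (x : V) c

/-! ### Auxiliary machinery -/

open SimpleGraph in
lemma WG_reach_of_eq {β : Type*} {H : SimpleGraph β} {T : Set β} (t1 t2 : T)
    (h : (t1 : β) = (t2 : β)) : (H.induce T).Reachable t1 t2 := by
  cases Subtype.ext h
  exact SimpleGraph.Reachable.refl _

open SimpleGraph in
lemma WG_reach_transfer {α β : Type*} {G : SimpleGraph α} {H : SimpleGraph β}
    {S : Set α} {T : Set β} {φ : α → β} (hmap : ∀ a ∈ S, φ a ∈ T)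
    (hadj : ∀ (a c : α) (ha : a ∈ S) (hc : c ∈ S), G.Adj a c →
      (H.induce T).Reachable ⟨φ a, hmap a ha⟩ ⟨φ c, hmap c hc⟩) :
    ∀ x y : S, (G.induce S).Reachable x y →
      (H.induce T).Reachable ⟨φ x, hmap x x.2⟩ ⟨φ y, hmap y y.2⟩ := by
  intro x y h
  obtain ⟨wlk⟩ := h
  induction wlk with
  | nil => exact SimpleGraph.Reachable.refl _
  | cons h p ih => exact (hadj _ _ (Subtype.mem _) (Subtype.mem _) h).trans ih

open SimpleGraph in
lemma WG_connected_transfer {α β : Type*} {G : SimpleGraph α} {H : SimpleGraph β}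
    {S : Set α} {T : Set β} {φ : α → β} (hmap : ∀ a ∈ S, φ a ∈ T)
    (hadj : ∀ (a c : α) (ha : a ∈ S) (hc : c ∈ S), G.Adj a c →
      (H.induce T).Reachable ⟨φ a, hmap a ha⟩ ⟨φ c, hmap c hc⟩)
    (hreach : ∀ t : T, ∃ a, ∃ ha : a ∈ S, (H.induce T).Reachable t ⟨φ a, hmap a ha⟩)
    (hconn : (G.induce S).Connected) : (H.induce T).Connected := by
  rw [SimpleGraph.connected_iff]
  constructor
  · intro t1 t2
    obtain ⟨a1, ha1, r1⟩ := hreach t1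
    obtain ⟨a2, ha2, r2⟩ := hreach t2
    exact r1.trans ((WG_reach_transfer hmap hadj ⟨a1, ha1⟩ ⟨a2, ha2⟩
      (hconn.preconnected _ _)).trans r2.symm)
  · obtain ⟨⟨a, ha⟩⟩ := hconn.nonempty
    exact ⟨⟨φ a, hmap a ha⟩⟩

open SimpleGraph in
lemma WG_prefix_reach {V : Type*} {G : SimpleGraph V} {s : ℕ} {v : Fin s → V}
    (hpath : ∀ (j : ℕ) (h : j + 1 < s), G.Adj (v ⟨j, by omega⟩) (v ⟨j + 1, h⟩))
    {T : Set V} {m : ℕ} (hT : ∀ (j : ℕ) (hj : j < s), j ≤ m → v ⟨j, hj⟩ ∈ T) :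
    ∀ (j : ℕ) (hj : j < s) (hjm : j ≤ m) (h0 : 0 < s),
      (G.induce T).Reachable ⟨v ⟨0, h0⟩, hT 0 h0 (Nat.zero_le _)⟩ ⟨v ⟨j, hj⟩, hT j hj hjm⟩ := by
  intro j
  induction j with
  | zero => intro hj hjm h0; exact SimpleGraph.Reachable.refl _
  | succ n ih =>
    intro hj hjm h0
    have r := ih (by omega) (by omega) h0
    refine r.trans (SimpleGraph.Adj.reachable ?_)
    exact hpath n hj

/-- The distinguished contracted vertex `b`. -/
def bSub {V : Type*} (b : V) {s : ℕ} (v : Fin s → V) (i : Fin s) : ContractedVerts b v i :=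
  ⟨b, Or.inl rfl⟩

/-- The image of a district of `G` in the contracted graph. -/
noncomputable def contrD {V : Type*} [Fintype V] (b : V) {s : ℕ} (v : Fin s → V) (i : Fin s)
    (D : Finset V) : Finset (ContractedVerts b v i) :=
  Finset.univ.filter (fun x : ContractedVerts b v i => (x : V) ∈ D)

lemma mem_contrD {V : Type*} [Fintype V] {b : V} {s : ℕ} {v : Fin s → V} {i : Fin s}
    {D : Finset V} {x : ContractedVerts b v i} : x ∈ contrD b v i D ↔ (x : V) ∈ D := by
  simp [contrD]

/-- The expansion of a district of the contracted graph back to `G`. -/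
noncomputable def expD {V : Type*} [DecidableEq V] (b : V) {s : ℕ} (v : Fin s → V) (i : Fin s)
    (D' : Finset (ContractedVerts b v i)) : Finset V :=
  (D'.erase (bSub b v i)).image Subtype.val ∪
    (if bSub b v i ∈ D'
      then (Finset.univ.filter (fun j : Fin s => j ≤ i)).image v else ∅)

lemma expD_mem_prefix {V : Type*} [DecidableEq V] {b : V} {s : ℕ} {v : Fin s → V} {i : Fin s}
    {D' : Finset (ContractedVerts b v i)} (hb' : bSub b v i ∈ D') {j : Fin s} (hj : j ≤ i) :
    v j ∈ expD b v i D' := by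
  unfold expD
  rw [if_pos hb']
  apply Finset.mem_union_right
  exact Finset.mem_image_of_mem v (by simp [hj])

lemma expD_mem_of_mem {V : Type*} [DecidableEq V] {b : V} {s : ℕ} {v : Fin s → V} {i : Fin s}
    (h0s : 0 < s) (hv0 : v ⟨0, h0s⟩ = b)
    {D' : Finset (ContractedVerts b v i)} {x : ContractedVerts b v i} (hx : x ∈ D') :
    (x : V) ∈ expD b v i D' := by
  by_cases hxb : x = bSub b v i
  · have hxv : (x : V) = v ⟨0, h0s⟩ := by rw [hxb, hv0]; rfl
    rw [hxv]
    exact expD_mem_prefix (hxb ▸ hx) (Fin.le_def.mpr (Nat.zero_le _))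
  · unfold expD
    apply Finset.mem_union_left
    exact Finset.mem_image_of_mem _ (Finset.mem_erase.mpr ⟨hxb, hx⟩)

lemma expD_elim {V : Type*} [DecidableEq V] {b : V} {s : ℕ} {v : Fin s → V} {i : Fin s}
    {D' : Finset (ContractedVerts b v i)} {y : V} (hy : y ∈ expD b v i D') :
    (∃ x : ContractedVerts b v i, x ∈ D' ∧ x ≠ bSub b v i ∧ (x : V) = y) ∨
      (bSub b v i ∈ D' ∧ ∃ j : Fin s, j ≤ i ∧ y = v j) := by
  unfold expD at hy
  rcases Finset.mem_union.mp hy with h | h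
  · obtain ⟨x, hx, rfl⟩ := Finset.mem_image.mp h
    obtain ⟨hxb, hxD⟩ := Finset.mem_erase.mp hx
    exact Or.inl ⟨x, hxD, hxb, rfl⟩
  · by_cases hb' : bSub b v i ∈ D'
    · rw [if_pos hb'] at h
      obtain ⟨j, hj, rfl⟩ := Finset.mem_image.mp h
      exact Or.inr ⟨hb', j, by simpa using hj, rfl⟩
    · rw [if_neg hb'] at h
      exact absurd h (Finset.notMem_empty _)

/-- The collapse map sending the contracted prefix to `b` and every other vertex to itself. -/
noncomputable def collapseMap {V : Type*} (b : V) {s : ℕ} (v : Fin s → V) (i : Fin s) :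
    V → ContractedVerts b v i := fun x =>
  if h : x = b ∨ ∀ j : Fin s, j ≤ i → x ≠ v j then ⟨x, h⟩ else bSub b v i

lemma collapseMap_of_prop {V : Type*} {b : V} {s : ℕ} {v : Fin s → V} {i : Fin s}
    (x : V) (h : x = b ∨ ∀ j : Fin s, j ≤ i → x ≠ v j) :
    collapseMap b v i x = ⟨x, h⟩ := dif_pos h

lemma collapseMap_collapse {V : Type*} {b : V} {s : ℕ} {v : Fin s → V} {i : Fin s}
    (x : V) (h : ∃ j : Fin s, j ≤ i ∧ x = v j) :
    collapseMap b v i x = bSub b v i := by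
  obtain ⟨j, hj, rfl⟩ := h
  unfold collapseMap
  by_cases hp : v j = b ∨ ∀ j' : Fin s, j' ≤ i → v j ≠ v j'
  · rw [dif_pos hp]
    rcases hp with h' | h'
    · exact Subtype.ext h'
    · exact absurd rfl (h' j hj)
  · rw [dif_neg hp]

lemma collapseMap_survive {V : Type*} {b : V} {s : ℕ} {v : Fin s → V} {i : Fin s}
    (h0s : 0 < s) (hv0 : v ⟨0, h0s⟩ = b)
    (x : V) (h : ¬ ∃ j : Fin s, j ≤ i ∧ x = v j) :
    ∃ hp : x = b ∨ ∀ j : Fin s, j ≤ i → x ≠ v j,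
      collapseMap b v i x = ⟨x, hp⟩ ∧ x ≠ b := by
  have hxb : x ≠ b := fun he =>
    h ⟨⟨0, h0s⟩, Fin.le_def.mpr (Nat.zero_le _), by rw [hv0]; exact he⟩
  have hp : ∀ j : Fin s, j ≤ i → x ≠ v j := fun j hj he => h ⟨j, hj, he⟩
  exact ⟨Or.inr hp, dif_pos _, hxb⟩

lemma WG_votes_contract_eq {V C : Type*} [Fintype V] [DecidableEq V]
    {w : V → C → ℕ} {b : V} {s : ℕ} {v : Fin s → V} {i : Fin s}
    (hinj : Function.Injective v) (h0s : 0 < s) (hv0 : v ⟨0, h0s⟩ = b)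
    (c : C) (D : Finset V)
    (hcase : (b ∈ D ∧ ∀ j : Fin s, j ≤ i → v j ∈ D) ∨ (∀ j : Fin s, j ≤ i → v j ∉ D)) :
    votesW (contractWeight w b v i) c (contrD b v i D) = votesW w c D := by
  classical
  unfold votesW
  rcases hcase with ⟨hbD, hpre⟩ | hpre
  · have hbmem : (⟨b, Or.inl rfl⟩ : ContractedVerts b v i) ∈ contrD b v i D :=
      mem_contrD.mpr hbD
    have hpsub : ((Finset.univ.filter (fun j : Fin s => j ≤ i)).image v) ⊆ D := by
      intro y hy
      simp only [Finset.mem_image, Finset.mem_filter] at hy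
      obtain ⟨j, ⟨_, hj⟩, rfl⟩ := hy
      exact hpre j hj
    rw [← Finset.sum_erase_add _ _ hbmem, ← Finset.sum_sdiff hpsub]
    congr 1
    · refine Finset.sum_bij (fun x _ => (x : V)) ?_ ?_ ?_ ?_
      · intro x hx
        obtain ⟨hxb, hxD⟩ := Finset.mem_erase.mp hx
        have hxD' := mem_contrD.mp hxD
        have hxnb : (x : V) ≠ b := fun h => hxb (Subtype.ext h)
        simp only [Finset.mem_sdiff]
        refine ⟨hxD', fun hxm => ?_⟩
        simp only [Finset.mem_image, Finset.mem_filter] at hxm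
        obtain ⟨j, ⟨_, hj⟩, hje⟩ := hxm
        rcases x.2 with h | h
        · exact hxnb h
        · exact h j hj hje.symm
      · intro x1 _ x2 _ h; exact Subtype.ext h
      · intro y hy
        obtain ⟨hyD, hym⟩ := Finset.mem_sdiff.mp hy
        have hprop : ∀ j : Fin s, j ≤ i → y ≠ v j := by
          intro j hj he
          apply hym
          simp only [Finset.mem_image, Finset.mem_filter]
          exact ⟨j, ⟨Finset.mem_univ j, hj⟩, he.symm⟩
        have hynb : y ≠ b := by
          intro h
          exact hprop ⟨0, h0s⟩ (Fin.le_def.mpr (Nat.zero_le _)) (by rw [hv0]; exact h)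
        exact ⟨⟨y, Or.inr hprop⟩, Finset.mem_erase.mpr
          ⟨fun h => hynb (congrArg Subtype.val h), mem_contrD.mpr hyD⟩, rfl⟩
      · intro x hx
        have hxnb : (x : V) ≠ b := fun h => (Finset.mem_erase.mp hx).1 (Subtype.ext h)
        simp [contractWeight, hxnb]
    · rw [Finset.sum_image (fun a _ a' _ h => hinj h)]
      simp [contractWeight]
  · refine Finset.sum_bij (fun x _ => (x : V)) ?_ ?_ ?_ ?_
    · intro x hx; exact mem_contrD.mp hx
    · intro x1 _ x2 _ h; exact Subtype.ext h
    · intro y hy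
      have hprop : ∀ j : Fin s, j ≤ i → y ≠ v j := fun j hj he => hpre j hj (he ▸ hy)
      exact ⟨⟨y, Or.inr hprop⟩, mem_contrD.mpr hy, rfl⟩
    · intro x hx
      have hxD : (x : V) ∈ D := mem_contrD.mp hx
      have hxnb : (x : V) ≠ b := by
        intro h
        exact hpre ⟨0, h0s⟩ (Fin.le_def.mpr (Nat.zero_le _)) (by rw [hv0, ← h]; exact hxD)
      simp [contractWeight, hxnb]

lemma WG_votes_expand_eq {V C : Type*} [DecidableEq V]
    {w : V → C → ℕ} {b : V} {s : ℕ} {v : Fin s → V} {i : Fin s}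
    (hinj : Function.Injective v)
    (c : C) (D' : Finset (ContractedVerts b v i)) :
    votesW w c (expD b v i D') = votesW (contractWeight w b v i) c D' := by
  classical
  unfold votesW expD bSub
  by_cases hb : (⟨b, Or.inl rfl⟩ : ContractedVerts b v i) ∈ D'
  · rw [if_pos hb]
    have hdisj : Disjoint ((D'.erase ⟨b, Or.inl rfl⟩).image Subtype.val)
        ((Finset.univ.filter (fun j : Fin s => j ≤ i)).image v) := by
      rw [Finset.disjoint_left]
      intro y hy hy'
      simp only [Finset.mem_image, Finset.mem_erase] at hy hy'
      obtain ⟨x, ⟨hxne, hxD⟩, rfl⟩ := hy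
      obtain ⟨j, hj, hje⟩ := hy'
      rcases x.2 with h | h
      · exact hxne (Subtype.ext h)
      · exact h j (by simpa using hj) hje.symm
    rw [Finset.sum_union hdisj,
        Finset.sum_image (fun a _ a' _ h => Subtype.ext h),
        Finset.sum_image (fun a _ a' _ h => hinj h),
        ← Finset.sum_erase_add _ _ hb]
    congr 1
    · apply Finset.sum_congr rfl
      intro x hx
      have hxnb : (x : V) ≠ b := fun h => (Finset.mem_erase.mp hx).1 (Subtype.ext h)
      simp [contractWeight, hxnb]
    · simp [contractWeight]
  · rw [if_neg hb, Finset.union_empty, Finset.erase_eq_of_notMem hb,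
        Finset.sum_image (fun a _ a' _ h => Subtype.ext h)]
    apply Finset.sum_congr rfl
    intro x hx
    have hxnb : (x : V) ≠ b := fun h => hb ((Subtype.ext h : x = ⟨b, Or.inl rfl⟩) ▸ hx)
    simp [contractWeight, hxnb]

lemma WG_satisfying_transfer {V1 V2 C : Type*} [DecidableEq V2] {w1 : V1 → C → ℕ} {w2 : V2 → C → ℕ}
    {p : C} {P : Finset (Finset V1)} (f : Finset V1 → Finset V2)
    (hinj : Set.InjOn f P)
    (hv : ∀ D ∈ P, ∀ c, votesW w2 c (f D) = votesW w1 c D)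
    (hsat : SatisfyingW w1 p P) : SatisfyingW w2 p (P.image f) := by
  classical
  intro q hq
  have him : ∀ (pr1 : Finset V1 → Prop) (pr2 : Finset V2 → Prop),
      (∀ D ∈ P, (pr2 (f D) ↔ pr1 D)) →
      ((P.image f).filter pr2) = (P.filter pr1).image f := by
    intro pr1 pr2 hpr
    ext E
    simp only [Finset.mem_filter, Finset.mem_image]
    constructor
    · rintro ⟨⟨D, hD, rfl⟩, h2⟩
      exact ⟨D, ⟨hD, (hpr D hD).mp h2⟩, rfl⟩
    · rintro ⟨D, ⟨hD, h1⟩, rfl⟩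
      exact ⟨⟨D, hD, rfl⟩, (hpr D hD).mpr h1⟩
  have hlead : ∀ D ∈ P, (leadsW w2 q (f D) ↔ leadsW w1 q D) := by
    intro D hD
    unfold leadsW
    simp only [hv D hD]
  have hwins : ∀ D ∈ P, (winsW w2 p (f D) ↔ winsW w1 p D) := by
    intro D hD
    unfold winsW
    simp only [hv D hD]
  rw [him _ _ hlead, him _ _ hwins,
      Finset.card_image_of_injOn (hinj.mono (Finset.coe_subset.mpr (Finset.filter_subset _ _))),
      Finset.card_image_of_injOn (hinj.mono (Finset.coe_subset.mpr (Finset.filter_subset _ _)))]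
  exact hsat q hq

set_option maxHeartbeats 4000000 in
/-- branching correctness in Theorem 3.  Let `(G, C, w, p, k)` be a
Weighted Gerrymandering instance where `G` is a finite tree, `b` a branch vertex of `G`, and
`S = v_1, …, v_s` a segment of `G` with `v_1 = b`.  For `i ∈ [s]`, let `G'_i` be obtained from
`G` by deleting the edge `v_i v_{i+1}` (when `i < s`) and contracting `v_1, …, v_i` into the
single vertex `b`, with weight vector `w'(b) = ∑_{j=1}^{i} w(v_j)` and all other weights
unchanged.  Then `G` admits a satisfying district-partition into `k` districts iff some `G'_i`
does. -/
theorem branching_correctness {V C : Type*} [Fintype V] [DecidableEq V] [Fintype C]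
    [DecidableEq C]
    (G : SimpleGraph V) [DecidableRel G.Adj] (hG : G.IsTree)
    (w : V → C → ℕ) (p : C) (k : ℕ)
    (b : V) (hb : 3 ≤ G.degree b)
    (s : ℕ) (hs : 2 ≤ s) (v : Fin s → V)
    (hv1 : v ⟨0, by omega⟩ = b)
    (hinj : Function.Injective v)
    (hpath : ∀ (j : ℕ) (h : j + 1 < s), G.Adj (v ⟨j, by omega⟩) (v ⟨j + 1, h⟩))
    (hend : G.degree (v ⟨s - 1, by omega⟩) = 1 ∨ 3 ≤ G.degree (v ⟨s - 1, by omega⟩))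
    (hinternal : ∀ (j : ℕ) (h : j < s), 0 < j → j < s - 1 → G.degree (v ⟨j, h⟩) = 2) :
    (∃ P : Finset (Finset V), IsDistrictPartition G k P ∧ SatisfyingW w p P) ↔
      (∃ i : Fin s, ∃ P' : Finset (Finset (ContractedVerts b v i)),
        IsDistrictPartition (contractGraph G b v i) k P' ∧
          SatisfyingW (contractWeight w b v i) p P') := by
  classical
  have h0s : 0 < s := by omega
  have hv0 : v ⟨0, h0s⟩ = b := hv1
  constructor
  · rintro ⟨P, ⟨hcard, hPne, hdisj, hcover, hconn⟩, hsat⟩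
    obtain ⟨D₀, hD₀P, hbD₀⟩ := hcover b
    obtain ⟨m, hms, hQm, hmax⟩ :
        ∃ m, m < s ∧ (∀ j : Fin s, (j : ℕ) ≤ m → v j ∈ D₀) ∧
          ∀ k', m < k' → k' ≤ s - 1 → ¬∀ j : Fin s, (j : ℕ) ≤ k' → v j ∈ D₀ := by
      have hQ0 : ∀ j : Fin s, (j : ℕ) ≤ 0 → v j ∈ D₀ := by
        intro j hj
        have hj0 : j = ⟨0, h0s⟩ := Fin.ext (show (j : ℕ) = 0 by omega)
        rw [hj0, hv0]
        exact hbD₀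
      exact ⟨Nat.findGreatest (fun n => ∀ j : Fin s, (j : ℕ) ≤ n → v j ∈ D₀) (s - 1),
        lt_of_le_of_lt (Nat.findGreatest_le _) (by omega),
        Nat.findGreatest_spec (P := fun n => ∀ j : Fin s, (j : ℕ) ≤ n → v j ∈ D₀)
          (Nat.zero_le _) hQ0,
        fun k' hk1 hk2 => Nat.findGreatest_is_greatest hk1 hk2⟩
    have hnext : ∀ h : m + 1 < s, v ⟨m + 1, h⟩ ∉ D₀ := by
      intro h hmem
      apply hmax (m + 1) (Nat.lt_succ_self m) (by omega)
      intro j hj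
      rcases Nat.lt_or_ge (j : ℕ) (m + 1) with h' | h'
      · exact hQm j (by omega)
      · have hje : j = ⟨m + 1, h⟩ := Fin.ext (show (j : ℕ) = m + 1 by omega)
        rw [hje]; exact hmem
    have hDeq : ∀ D ∈ P, b ∈ D → D = D₀ := by
      intro D hD hbD
      by_contra hne'
      exact Finset.disjoint_left.mp (hdisj D hD D₀ hD₀P hne') hbD hbD₀
    have hcase : ∀ D ∈ P,
        (b ∈ D ∧ (∀ j : Fin s, j ≤ (⟨m, hms⟩ : Fin s) → v j ∈ D) ∧
          ∀ h : m + 1 < s, v ⟨m + 1, h⟩ ∉ D) ∨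
        (b ∉ D ∧ ∀ j : Fin s, j ≤ (⟨m, hms⟩ : Fin s) → v j ∉ D) := by
      intro D hD
      by_cases hbD : b ∈ D
      · left
        have hDD := hDeq D hD hbD
        refine ⟨hbD, fun j hj => ?_, fun h hmem => ?_⟩
        · rw [hDD]; exact hQm j (Fin.le_def.mp hj)
        · rw [hDD] at hmem; exact hnext h hmem
      · right
        refine ⟨hbD, fun j hj hmem => ?_⟩
        have hvD₀ : v j ∈ D₀ := hQm j (Fin.le_def.mp hj)
        have hne' : D ≠ D₀ := fun h => hbD (h ▸ hbD₀)
        exact Finset.disjoint_left.mp (hdisj D hD D₀ hD₀P hne') hmem hvD₀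
    have hfne : ∀ D ∈ P, (contrD b v ⟨m, hms⟩ D).Nonempty := by
      intro D hD
      rcases hcase D hD with ⟨hbD, _, _⟩ | ⟨_, hpre⟩
      · exact ⟨⟨b, Or.inl rfl⟩, mem_contrD.mpr hbD⟩
      · obtain ⟨y, hy⟩ := hPne D hD
        have hprop : ∀ j : Fin s, j ≤ (⟨m, hms⟩ : Fin s) → y ≠ v j :=
          fun j hj he => hpre j hj (he ▸ hy)
        exact ⟨⟨y, Or.inr hprop⟩, mem_contrD.mpr hy⟩
    have hfdisj : ∀ D ∈ P, ∀ D' ∈ P, D ≠ D' →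
        Disjoint (contrD b v ⟨m, hms⟩ D) (contrD b v ⟨m, hms⟩ D') := by
      intro D hD D' hD' hne'
      rw [Finset.disjoint_left]
      intro x hx hx'
      exact Finset.disjoint_left.mp (hdisj D hD D' hD' hne')
        (mem_contrD.mp hx) (mem_contrD.mp hx')
    have hfinj : Set.InjOn (contrD b v ⟨m, hms⟩) ↑P := by
      intro D hD D' hD' hEq
      by_contra hne'
      obtain ⟨x, hx⟩ := hfne D (Finset.mem_coe.mp hD)
      exact Finset.disjoint_left.mp
        (hfdisj D (Finset.mem_coe.mp hD) D' (Finset.mem_coe.mp hD') hne') hx (hEq ▸ hx)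
    refine ⟨⟨m, hms⟩, Finset.image (contrD b v ⟨m, hms⟩) P, ⟨?_, ?_, ?_, ?_, ?_⟩, ?_⟩
    · rw [Finset.card_image_of_injOn hfinj]; exact hcard
    · intro E hE
      obtain ⟨D, hD, rfl⟩ := Finset.mem_image.mp hE
      exact hfne D hD
    · intro E hE E' hE' hne'
      obtain ⟨D, hD, rfl⟩ := Finset.mem_image.mp hE
      obtain ⟨D', hD', rfl⟩ := Finset.mem_image.mp hE'
      exact hfdisj D hD D' hD' (fun h => hne' (h ▸ rfl))
    · intro x
      obtain ⟨D, hD, hx⟩ := hcover (x : V)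
      exact ⟨contrD b v ⟨m, hms⟩ D, Finset.mem_image_of_mem _ hD, mem_contrD.mpr hx⟩
    · -- connectivity
      intro E hE
      obtain ⟨D, hD, rfl⟩ := Finset.mem_image.mp hE
      have hmapmem : ∀ a ∈ (↑D : Set V),
          collapseMap b v ⟨m, hms⟩ a ∈
            (↑(contrD b v ⟨m, hms⟩ D) : Set (ContractedVerts b v ⟨m, hms⟩)) := by
        intro a ha
        rw [Finset.mem_coe, mem_contrD]
        by_cases hex : ∃ j : Fin s, j ≤ (⟨m, hms⟩ : Fin s) ∧ a = v j
        · rw [collapseMap_collapse a hex]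
          rcases hcase D hD with ⟨hbD, _, _⟩ | ⟨_, hpre⟩
          · exact hbD
          · obtain ⟨j, hj, hje⟩ := hex
            exact absurd (hje ▸ (Finset.mem_coe.mp ha)) (hpre j hj)
        · obtain ⟨hp, hce, -⟩ := collapseMap_survive h0s hv0 a hex
          rw [hce]
          exact Finset.mem_coe.mp ha
      refine WG_connected_transfer hmapmem ?_ ?_ (hconn D hD)
      · intro a c ha hc hGac
        have step : ∀ (x y : ContractedVerts b v ⟨m, hms⟩)
            (hx : x ∈ (↑(contrD b v ⟨m, hms⟩ D) : Set (ContractedVerts b v ⟨m, hms⟩)))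
            (hy : y ∈ (↑(contrD b v ⟨m, hms⟩ D) : Set (ContractedVerts b v ⟨m, hms⟩))),
            (x = y ∨ (contractGraph G b v ⟨m, hms⟩).Adj x y) →
            ((contractGraph G b v ⟨m, hms⟩).induce
              ↑(contrD b v ⟨m, hms⟩ D)).Reachable ⟨x, hx⟩ ⟨y, hy⟩ := by
          rintro x y hx hy (rfl | h)
          · exact SimpleGraph.Reachable.refl _
          · exact SimpleGraph.Adj.reachable h
        apply step
        by_cases hea : ∃ j : Fin s, j ≤ (⟨m, hms⟩ : Fin s) ∧ a = v j
          <;> by_cases hec : ∃ j : Fin s, j ≤ (⟨m, hms⟩ : Fin s) ∧ c = v j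
        · left
          rw [collapseMap_collapse a hea, collapseMap_collapse c hec]
        · right
          rw [collapseMap_collapse a hea]
          obtain ⟨hpc, hce, hcnb⟩ := collapseMap_survive h0s hv0 c hec
          rw [hce]
          obtain ⟨j, hj, hje⟩ := hea
          rcases hcase D hD with ⟨hbD, hpreD, hnoD⟩ | ⟨_, hpre⟩
          · simp only [contractGraph, SimpleGraph.fromRel_adj]
            refine ⟨fun h => hcnb (congrArg Subtype.val h).symm,
              Or.inl (Or.inr ⟨rfl, j, hj, ?_, ?_⟩)⟩
            · exact hje ▸ hGac
            · rintro ⟨rfl, hlt, hceq⟩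
              exact hnoD hlt (hceq ▸ Finset.mem_coe.mp hc)
          · exact absurd (hje ▸ Finset.mem_coe.mp ha) (hpre j hj)
        · right
          rw [collapseMap_collapse c hec]
          obtain ⟨hpa, hae, hanb⟩ := collapseMap_survive h0s hv0 a hea
          rw [hae]
          obtain ⟨j, hj, hje⟩ := hec
          rcases hcase D hD with ⟨hbD, hpreD, hnoD⟩ | ⟨_, hpre⟩
          · simp only [contractGraph, SimpleGraph.fromRel_adj]
            refine ⟨fun h => hanb (congrArg Subtype.val h),
              Or.inr (Or.inr ⟨rfl, j, hj, ?_, ?_⟩)⟩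
            · exact hje ▸ hGac.symm
            · rintro ⟨rfl, hlt, haeq⟩
              exact hnoD hlt (haeq ▸ Finset.mem_coe.mp ha)
          · exact absurd (hje ▸ Finset.mem_coe.mp hc) (hpre j hj)
        · obtain ⟨hpa, hae, hanb⟩ := collapseMap_survive h0s hv0 a hea
          obtain ⟨hpc, hce, hcnb⟩ := collapseMap_survive h0s hv0 c hec
          right
          rw [hae, hce]
          simp only [contractGraph, SimpleGraph.fromRel_adj]
          exact ⟨fun h => hGac.ne (congrArg Subtype.val h),
            Or.inl (Or.inl ⟨hanb, hcnb, hGac⟩)⟩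
      · intro t
        obtain ⟨x, hxT⟩ := t
        have hxD : (x : V) ∈ D := mem_contrD.mp (Finset.mem_coe.mp hxT)
        refine ⟨(x : V), Finset.mem_coe.mpr hxD, WG_reach_of_eq _ _ ?_⟩
        show x = collapseMap b v ⟨m, hms⟩ (x : V)
        exact (collapseMap_of_prop (x : V) x.2).symm
    · apply WG_satisfying_transfer _ hfinj ?_ hsat
      intro D hD c
      apply WG_votes_contract_eq hinj h0s hv0 c D
      rcases hcase D hD with ⟨hbD, hpre, _⟩ | ⟨_, hpre⟩
      · exact Or.inl ⟨hbD, hpre⟩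
      · exact Or.inr hpre
  · rintro ⟨i, P', ⟨hcard, hPne, hdisj, hcover, hconn⟩, hsat⟩
    have hgdisj : ∀ D1 ∈ P', ∀ D2 ∈ P', D1 ≠ D2 →
        Disjoint (expD b v i D1) (expD b v i D2) := by
      intro D1 h1 D2 h2 hne12
      rw [Finset.disjoint_left]
      intro y hy1 hy2
      have hd := hdisj D1 h1 D2 h2 hne12
      rcases expD_elim hy1 with ⟨x1, hx1, hx1b, he1⟩ | ⟨hb1, j1, hj1, he1⟩
      · rcases expD_elim hy2 with ⟨x2, hx2, hx2b, he2⟩ | ⟨hb2, j2, hj2, he2⟩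
        · have : x2 = x1 := Subtype.ext (he2.trans he1.symm)
          exact Finset.disjoint_left.mp hd hx1 (this ▸ hx2)
        · rcases x1.2 with h | h
          · exact hx1b (Subtype.ext h)
          · exact h j2 hj2 (he1.trans he2)
      · rcases expD_elim hy2 with ⟨x2, hx2, hx2b, he2⟩ | ⟨hb2, j2, hj2, he2⟩
        · rcases x2.2 with h | h
          · exact hx2b (Subtype.ext h)
          · exact h j1 hj1 (he2.trans he1)
        · exact Finset.disjoint_left.mp hd hb1 hb2
    have hgne : ∀ D' ∈ P', (expD b v i D').Nonempty := by
      intro D' hD'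
      obtain ⟨x, hx⟩ := hPne D' hD'
      exact ⟨(x : V), expD_mem_of_mem h0s hv0 hx⟩
    have hginj : Set.InjOn (expD b v i) ↑P' := by
      intro D1 h1 D2 h2 hEq
      by_contra hne12
      obtain ⟨y, hy⟩ := hgne D1 (Finset.mem_coe.mp h1)
      exact Finset.disjoint_left.mp
        (hgdisj D1 (Finset.mem_coe.mp h1) D2 (Finset.mem_coe.mp h2) hne12) hy (hEq ▸ hy)
    refine ⟨Finset.image (expD b v i) P', ⟨?_, ?_, ?_, ?_, ?_⟩, ?_⟩
    · rw [Finset.card_image_of_injOn hginj]; exact hcard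
    · intro E hE
      obtain ⟨D', hD', rfl⟩ := Finset.mem_image.mp hE
      exact hgne D' hD'
    · intro E hE E' hE' hne'
      obtain ⟨D1, h1, rfl⟩ := Finset.mem_image.mp hE
      obtain ⟨D2, h2, rfl⟩ := Finset.mem_image.mp hE'
      exact hgdisj D1 h1 D2 h2 (fun h => hne' (h ▸ rfl))
    · intro y
      by_cases hy : y = b ∨ ∀ j : Fin s, j ≤ i → y ≠ v j
      · obtain ⟨D', hD', hx⟩ := hcover ⟨y, hy⟩
        exact ⟨expD b v i D', Finset.mem_image_of_mem _ hD', expD_mem_of_mem h0s hv0 hx⟩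
      · push_neg at hy
        obtain ⟨hyb, j, hj, hyv⟩ := hy
        obtain ⟨D', hD', hbD'⟩ := hcover (bSub b v i)
        refine ⟨expD b v i D', Finset.mem_image_of_mem _ hD', ?_⟩
        rw [hyv]
        exact expD_mem_prefix hbD' hj
    · -- connectivity
      intro E hE
      obtain ⟨D', hD', rfl⟩ := Finset.mem_image.mp hE
      have hmapmem : ∀ a ∈ (↑D' : Set (ContractedVerts b v i)),
          (a : V) ∈ (↑(expD b v i D') : Set V) := by
        intro a ha
        exact Finset.mem_coe.mpr (expD_mem_of_mem h0s hv0 (Finset.mem_coe.mp ha))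
      have hprefT : bSub b v i ∈ D' → ∀ (j' : ℕ) (hj' : j' < s) (hle : j' ≤ (i : ℕ)),
          v ⟨j', hj'⟩ ∈ (↑(expD b v i D') : Set V) := by
        intro hbD' j' hj' hle
        exact Finset.mem_coe.mpr (expD_mem_prefix hbD' (Fin.le_def.mpr hle))
      refine WG_connected_transfer hmapmem ?_ ?_ (hconn D' hD')
      · intro x y hx hy hxy
        have hrel := hxy
        rw [contractGraph, SimpleGraph.fromRel_adj] at hrel
        obtain ⟨hnexy, hrel⟩ := hrel
        have edge1 : ∀ (x y : ContractedVerts b v i) (hx : x ∈ (↑D' : Set (ContractedVerts b v i)))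
            (hy : y ∈ (↑D' : Set (ContractedVerts b v i))),
            (((x : V) ≠ b ∧ (y : V) ≠ b ∧ G.Adj (x : V) (y : V)) ∨
              ((x : V) = b ∧ ∃ j : Fin s, j ≤ i ∧ G.Adj (v j) (y : V) ∧
                ¬(j = i ∧ ∃ h : (i : ℕ) + 1 < s, (y : V) = v ⟨(i : ℕ) + 1, h⟩))) →
            (G.induce ↑(expD b v i D')).Reachable
              ⟨(x : V), hmapmem x hx⟩ ⟨(y : V), hmapmem y hy⟩ := by
          rintro x y hx hy (⟨hxb, hyb, hGxy⟩ | ⟨hxb, j, hj, hGjy, -⟩)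
          · exact SimpleGraph.Adj.reachable hGxy
          · have hbD' : bSub b v i ∈ D' := by
              have : x = bSub b v i := Subtype.ext hxb
              exact this ▸ Finset.mem_coe.mp hx
            by_cases hyb : (y : V) = b
            · exact WG_reach_of_eq _ _ (hxb.trans hyb.symm)
            · have r := WG_prefix_reach hpath (hprefT hbD') (j : ℕ) j.isLt
                (Fin.le_def.mp hj) h0s
              refine ((WG_reach_of_eq ⟨(x : V), hmapmem x hx⟩
                ⟨v ⟨0, h0s⟩, hprefT hbD' 0 h0s (Nat.zero_le _)⟩
                (hxb.trans hv0.symm)).trans r).trans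
                (SimpleGraph.Adj.reachable ?_)
              exact hGjy
        rcases hrel with h | h
        · exact edge1 x y hx hy h
        · exact (edge1 y x hy hx h).symm
      · intro t
        rcases expD_elim (Finset.mem_coe.mp t.2) with ⟨x, hx, _, he⟩ | ⟨hbD', j, hj, he⟩
        · exact ⟨x, Finset.mem_coe.mpr hx, WG_reach_of_eq _ _ he.symm⟩
        · refine ⟨bSub b v i, Finset.mem_coe.mpr hbD', ?_⟩
          have r := WG_prefix_reach hpath (hprefT hbD') (j : ℕ) j.isLt (Fin.le_def.mp hj) h0s
          exact (WG_reach_of_eq t ⟨v ⟨(j : ℕ), j.isLt⟩,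
              hprefT hbD' (j : ℕ) j.isLt (Fin.le_def.mp hj)⟩ he).trans
            (r.symm.trans (WG_reach_of_eq ⟨v ⟨0, h0s⟩, hprefT hbD' 0 h0s (Nat.zero_le _)⟩
              ⟨(bSub b v i : V), hmapmem _ (Finset.mem_coe.mpr hbD')⟩ hv0))
    · apply WG_satisfying_transfer _ hginj ?_ hsat
      intro D' hD' c
      exact WG_votes_expand_eq hinj c D'
end
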